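/- arXiv:2112.13257 — 2 statements merged into one kernel-verified Lean document; each statement's English description precedes it below -/
import Mathlib

section
/- The FRSD iterates satisfy, for every k ≥ 1, ‖x̂(k) − x̂(k−1)‖ ≤ α v ṽ L ‖x(k) − x(k−1)‖_R + 3 α v ṽ² √n κ₃ σ_R^{k−1} ‖∇f(x(k))‖ + α nL ‖x(k) − x̂(k)‖_C + α nL ‖x̂(k) − x*_vec‖. -/
open Matrix Filter
open scoped Kronecker

noncomputable section

/-- Euclidean norm on `ι → ℝ`. -/
def eucNorm {ι : Type*} [Fintype ι] (z : ι → ℝ) : ℝ := Real.sqrt (∑ i, z i ^ 2)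

/-- Spectral norm (operator 2-norm) of a square real matrix. -/
def specNorm {ι : Type*} [Fintype ι] (A : Matrix ι ι ℝ) : ℝ :=
  sSup {c : ℝ | ∃ z : ι → ℝ, eucNorm z ≤ 1 ∧ c = eucNorm (A.mulVec z)}

/-- Matrix norm induced by a vector norm `N`: `sup_{z ≠ 0} N (A z) / N z`. -/
def opNorm {ι : Type*} [Fintype ι] (N : (ι → ℝ) → ℝ) (A : Matrix ι ι ℝ) : ℝ :=
  sSup {c : ℝ | ∃ z : ι → ℝ, z ≠ 0 ∧ c = N (A.mulVec z) / N z}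

/-- `g` is the gradient of `f : ℝ^p → ℝ`. -/
def IsGradient {p : ℕ} (f : (Fin p → ℝ) → ℝ) (g : (Fin p → ℝ) → Fin p → ℝ) : Prop :=
  ∀ x, HasFDerivAt f (∑ j, g x j • (ContinuousLinearMap.proj j : (Fin p → ℝ) →L[ℝ] ℝ)) x

/-- `R = R̄ ⊗ I_p`. -/
def RK (n p : ℕ) (Rb : Matrix (Fin n) (Fin n) ℝ) :
    Matrix (Fin n × Fin p) (Fin n × Fin p) ℝ :=
  Rb ⊗ₖ (1 : Matrix (Fin p) (Fin p) ℝ)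

/-- `V_∞ = (1_n π^T) ⊗ I_p`. -/
def VinfK (n p : ℕ) (π : Fin n → ℝ) :
    Matrix (Fin n × Fin p) (Fin n × Fin p) ℝ :=
  (Matrix.of (fun _ j => π j) : Matrix (Fin n) (Fin n) ℝ) ⊗ₖ (1 : Matrix (Fin p) (Fin p) ℝ)

/-- `V(k) = R̄^k ⊗ I_p`. -/
def VK (n p : ℕ) (Rb : Matrix (Fin n) (Fin n) ℝ) (k : ℕ) :
    Matrix (Fin n × Fin p) (Fin n × Fin p) ℝ :=
  (Rb ^ k) ⊗ₖ (1 : Matrix (Fin p) (Fin p) ℝ)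

/-- `Ṽ(k)⁻¹ = diag(((R̄^k)_{11})⁻¹, …, ((R̄^k)_{nn})⁻¹) ⊗ I_p`. -/
def VtinvK (n p : ℕ) (Rb : Matrix (Fin n) (Fin n) ℝ) (k : ℕ) :
    Matrix (Fin n × Fin p) (Fin n × Fin p) ℝ :=
  Matrix.diagonal (fun q => ((Rb ^ k) q.1 q.1)⁻¹)

/-- `∇f(z) = (∇f_1(z_1), …, ∇f_n(z_n))` block-wise. -/
def gradf {n p : ℕ} (g : Fin n → (Fin p → ℝ) → Fin p → ℝ) (z : Fin n × Fin p → ℝ) :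
    Fin n × Fin p → ℝ :=
  fun q => g q.1 (fun j => z (q.1, j)) q.2

/-- `x*_vec = 1_n ⊗ x*`. -/
def starVec (n p : ℕ) (xstar : Fin p → ℝ) : Fin n × Fin p → ℝ := fun q => xstar q.2

end

namespace Frsd

variable {ι : Type*} [Fintype ι]

lemma eucNorm_eq_norm (z : ι → ℝ) :
    eucNorm z = ‖(WithLp.equiv 2 (ι → ℝ)).symm z‖ := by
  rw [EuclideanSpace.norm_eq, eucNorm]
  congr 1
  refine Finset.sum_congr rfl fun i _ => ?_
  rw [Real.norm_eq_abs, sq_abs]; rfl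

lemma eucNorm_nonneg (z : ι → ℝ) : 0 ≤ eucNorm z := Real.sqrt_nonneg _

lemma eucNorm_zero : eucNorm (0 : ι → ℝ) = 0 := by
  simp [eucNorm]

lemma eucNorm_smul (a : ℝ) (z : ι → ℝ) : eucNorm (a • z) = |a| * eucNorm z := by
  rw [eucNorm_eq_norm, eucNorm_eq_norm]
  have : (WithLp.equiv 2 (ι → ℝ)).symm (a • z) = a • (WithLp.equiv 2 (ι → ℝ)).symm z := rfl
  rw [this, norm_smul, Real.norm_eq_abs]

lemma eucNorm_add_le (z w : ι → ℝ) : eucNorm (z + w) ≤ eucNorm z + eucNorm w := by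
  rw [eucNorm_eq_norm, eucNorm_eq_norm, eucNorm_eq_norm]
  exact norm_add_le _ _

lemma eucNorm_neg (z : ι → ℝ) : eucNorm (-z) = eucNorm z := by
  have : -z = (-1 : ℝ) • z := by funext i; simp
  rw [this, eucNorm_smul]; simp

lemma eucNorm_sub_rev (z w : ι → ℝ) : eucNorm (z - w) = eucNorm (w - z) := by
  rw [← eucNorm_neg (z - w), neg_sub]

lemma eucNorm_sum_le {κ : Type*} (s : Finset κ) (f : κ → ι → ℝ) :
    eucNorm (∑ i ∈ s, f i) ≤ ∑ i ∈ s, eucNorm (f i) := by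
  classical
  induction s using Finset.induction with
  | empty => simp [eucNorm_zero]
  | insert _ _ h ih =>
      rw [Finset.sum_insert h, Finset.sum_insert h]
      exact le_trans (eucNorm_add_le _ _) (by linarith)

lemma sq_eucNorm (z : ι → ℝ) : eucNorm z ^ 2 = ∑ i, z i ^ 2 :=
  Real.sq_sqrt (Finset.sum_nonneg fun i _ => sq_nonneg _)

lemma eucNorm_le_of_sq_le {z : ι → ℝ} {c : ℝ} (hc : 0 ≤ c)
    (h : ∑ i, z i ^ 2 ≤ c ^ 2) : eucNorm z ≤ c := by
  rw [eucNorm]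
  calc Real.sqrt (∑ i, z i ^ 2) ≤ Real.sqrt (c ^ 2) := Real.sqrt_le_sqrt h
  _ = c := Real.sqrt_sq hc

lemma abs_le_eucNorm (z : ι → ℝ) (q : ι) : |z q| ≤ eucNorm z := by
  rw [eucNorm, ← Real.sqrt_sq_eq_abs]
  exact Real.sqrt_le_sqrt (Finset.single_le_sum (fun i _ => sq_nonneg (z i)) (Finset.mem_univ q))

lemma eucNorm_single [DecidableEq ι] (q : ι) : eucNorm (Pi.single q 1 : ι → ℝ) = 1 := by
  rw [eucNorm]
  have : ∑ i, (Pi.single q 1 : ι → ℝ) i ^ 2 = 1 := by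
    rw [Finset.sum_eq_single q] <;> simp +contextual [Pi.single_apply]
  rw [this, Real.sqrt_one]

/-- Cauchy–Schwarz. -/
lemma sum_mul_le (z w : ι → ℝ) : ∑ i, z i * w i ≤ eucNorm z * eucNorm w := by
  have h := Finset.sum_mul_sq_le_sq_mul_sq Finset.univ z w
  have h2 : (∑ i, z i * w i) ≤ |∑ i, z i * w i| := le_abs_self _
  rw [← Real.sqrt_sq_eq_abs] at h2
  refine h2.trans ?_
  calc Real.sqrt ((∑ i, z i * w i) ^ 2) ≤ Real.sqrt ((∑ i, z i ^ 2) * ∑ i, w i ^ 2) :=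
        Real.sqrt_le_sqrt h
  _ = eucNorm z * eucNorm w := by
      rw [eucNorm, eucNorm, Real.sqrt_mul (Finset.sum_nonneg fun i _ => sq_nonneg _)]



lemma eucNorm_eq_zero_iff (z : ι → ℝ) : eucNorm z = 0 ↔ z = 0 := by
  rw [eucNorm_eq_norm, norm_eq_zero]
  constructor
  · intro h; have := congrArg (WithLp.equiv 2 (ι → ℝ)) h; simpa using this
  · intro h; rw [h]; rfl

lemma eucNorm_pos {z : ι → ℝ} (hz : z ≠ 0) : 0 < eucNorm z :=
  lt_of_le_of_ne (eucNorm_nonneg z) (fun h => hz ((eucNorm_eq_zero_iff z).1 h.symm))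

def specSet (A : Matrix ι ι ℝ) : Set ℝ :=
  {c : ℝ | ∃ z : ι → ℝ, eucNorm z ≤ 1 ∧ c = eucNorm (A.mulVec z)}

lemma specNorm_eq_sSup (A : Matrix ι ι ℝ) : specNorm A = sSup (specSet A) := rfl

lemma specSet_nonempty (A : Matrix ι ι ℝ) : (specSet A).Nonempty :=
  ⟨eucNorm (A.mulVec 0), 0, by simp [eucNorm_zero], rfl⟩

/-- A crude operator bound for any matrix. -/
lemma exists_mulVec_bound (A : Matrix ι ι ℝ) :
    ∃ C : ℝ, 0 ≤ C ∧ ∀ z : ι → ℝ, eucNorm (A.mulVec z) ≤ C * eucNorm z := by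
  classical
  let M : EuclideanSpace ℝ ι →ₗ[ℝ] EuclideanSpace ℝ ι :=
    { toFun := fun x => (WithLp.equiv 2 (ι → ℝ)).symm (A.mulVec (WithLp.equiv 2 (ι → ℝ) x))
      map_add' := by
        intro a b
        show (WithLp.equiv 2 (ι → ℝ)).symm (A.mulVec (WithLp.equiv 2 (ι → ℝ) a + WithLp.equiv 2 (ι → ℝ) b)) = _
        rw [Matrix.mulVec_add]; rfl
      map_smul' := by
        intro c a
        show (WithLp.equiv 2 (ι → ℝ)).symm (A.mulVec (c • WithLp.equiv 2 (ι → ℝ) a)) = _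
        rw [Matrix.mulVec_smul]; rfl }
  refine ⟨‖LinearMap.toContinuousLinearMap M‖, norm_nonneg _, fun z => ?_⟩
  have h := (LinearMap.toContinuousLinearMap M).le_opNorm ((WithLp.equiv 2 (ι → ℝ)).symm z)
  have h1 : (LinearMap.toContinuousLinearMap M) ((WithLp.equiv 2 (ι → ℝ)).symm z)
      = (WithLp.equiv 2 (ι → ℝ)).symm (A.mulVec z) := by
    simp [M]
  rw [h1] at h
  rw [eucNorm_eq_norm, eucNorm_eq_norm]
  exact h

lemma specSet_bddAbove (A : Matrix ι ι ℝ) : BddAbove (specSet A) := by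
  obtain ⟨C, hC0, hC⟩ := exists_mulVec_bound A
  refine ⟨C, fun c hc => ?_⟩
  obtain ⟨z, hz, rfl⟩ := hc
  calc eucNorm (A.mulVec z) ≤ C * eucNorm z := hC z
  _ ≤ C * 1 := by nlinarith [eucNorm_nonneg z]
  _ = C := mul_one C

lemma le_specNorm {A : Matrix ι ι ℝ} {z : ι → ℝ} (hz : eucNorm z ≤ 1) :
    eucNorm (A.mulVec z) ≤ specNorm A :=
  le_csSup (specSet_bddAbove A) ⟨z, hz, rfl⟩

lemma specNorm_nonneg (A : Matrix ι ι ℝ) : 0 ≤ specNorm A := by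
  have := le_specNorm (A := A) (z := 0) (by simp [eucNorm_zero])
  have h0 : eucNorm (A.mulVec (0 : ι → ℝ)) = 0 := by simp [eucNorm_zero]
  linarith [h0 ▸ this]

lemma specNorm_le {A : Matrix ι ι ℝ} {C : ℝ} (hC : 0 ≤ C)
    (h : ∀ z : ι → ℝ, eucNorm (A.mulVec z) ≤ C * eucNorm z) : specNorm A ≤ C := by
  refine csSup_le (specSet_nonempty A) ?_
  rintro c ⟨z, hz, rfl⟩
  calc eucNorm (A.mulVec z) ≤ C * eucNorm z := h z
  _ ≤ C * 1 := by nlinarith [eucNorm_nonneg z]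
  _ = C := mul_one C

lemma mulVec_le_specNorm (A : Matrix ι ι ℝ) (z : ι → ℝ) :
    eucNorm (A.mulVec z) ≤ specNorm A * eucNorm z := by
  by_cases hz : z = 0
  · simp [hz, Matrix.mulVec_zero, eucNorm_zero]
  · have hpos := eucNorm_pos hz
    have hu : eucNorm ((eucNorm z)⁻¹ • z) = 1 := by
      rw [eucNorm_smul, abs_of_pos (inv_pos.2 hpos), inv_mul_cancel₀ (ne_of_gt hpos)]
    have h := le_specNorm (A := A) (z := (eucNorm z)⁻¹ • z) (le_of_eq hu)
    rw [Matrix.mulVec_smul, eucNorm_smul, abs_of_pos (inv_pos.2 hpos)] at h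
    calc eucNorm (A.mulVec z) = eucNorm z * ((eucNorm z)⁻¹ * eucNorm (A.mulVec z)) := by
          field_simp
    _ ≤ eucNorm z * specNorm A := by nlinarith
    _ = specNorm A * eucNorm z := mul_comm _ _



end Frsd

namespace Frsd2
open Frsd

variable {n p : ℕ}

lemma pow_nonneg {Rb : Matrix (Fin n) (Fin n) ℝ} (h : ∀ i j, 0 ≤ Rb i j) :
    ∀ k i j, 0 ≤ (Rb ^ k) i j := by
  intro k
  induction k with
  | zero => intro i j; by_cases hij : i = j <;> simp [Matrix.one_apply, hij]
  | succ k ih =>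
      intro i j
      rw [pow_succ, Matrix.mul_apply]
      exact Finset.sum_nonneg fun l _ => mul_nonneg (ih i l) (h l j)

lemma pow_rowsum {Rb : Matrix (Fin n) (Fin n) ℝ} (hrow : ∀ i, ∑ j, Rb i j = 1) :
    ∀ k i, ∑ j, (Rb ^ k) i j = 1 := by
  intro k
  induction k with
  | zero => intro i; simp [Matrix.one_apply]
  | succ k ih =>
      intro i
      rw [pow_succ]
      simp only [Matrix.mul_apply]
      rw [Finset.sum_comm]
      calc ∑ l, ∑ j, (Rb ^ k) i l * Rb l j = ∑ l, (Rb ^ k) i l * ∑ j, Rb l j := by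
            refine Finset.sum_congr rfl fun l _ => ?_; rw [Finset.mul_sum]
      _ = 1 := by simp only [hrow, mul_one]; exact ih i

lemma pow_entry_le_one {Rb : Matrix (Fin n) (Fin n) ℝ} (h : ∀ i j, 0 ≤ Rb i j)
    (hrow : ∀ i, ∑ j, Rb i j = 1) (k : ℕ) (i j : Fin n) : (Rb ^ k) i j ≤ 1 := by
  have := pow_rowsum hrow k i
  have h2 := Finset.single_le_sum (f := fun j => (Rb ^ k) i j)
    (fun l _ => pow_nonneg h k i l) (Finset.mem_univ j)
  linarith

lemma pow_diag_pos {Rb : Matrix (Fin n) (Fin n) ℝ} (h : ∀ i j, 0 ≤ Rb i j)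
    (hdiag : ∀ i, 0 < Rb i i) : ∀ k i, 0 < (Rb ^ k) i i := by
  intro k
  induction k with
  | zero => intro i; simp [Matrix.one_apply]
  | succ k ih =>
      intro i
      rw [pow_succ, Matrix.mul_apply]
      have hterm : 0 < (Rb ^ k) i i * Rb i i := mul_pos (ih i) (hdiag i)
      have : ∀ l ∈ Finset.univ, 0 ≤ (Rb ^ k) i l * Rb l i :=
        fun l _ => mul_nonneg (pow_nonneg h k i l) (h l i)
      calc (0:ℝ) < (Rb ^ k) i i * Rb i i := hterm
      _ ≤ ∑ l, (Rb ^ k) i l * Rb l i := Finset.single_le_sum this (Finset.mem_univ i)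

lemma kmul (A B : Matrix (Fin n) (Fin n) ℝ) :
    (A ⊗ₖ (1 : Matrix (Fin p) (Fin p) ℝ)) * (B ⊗ₖ (1 : Matrix (Fin p) (Fin p) ℝ))
      = (A * B) ⊗ₖ (1 : Matrix (Fin p) (Fin p) ℝ) := by
  rw [← Matrix.mul_kronecker_mul, Matrix.one_mul]

lemma kdiag (w : Fin n → ℝ) :
    (Matrix.diagonal w) ⊗ₖ (1 : Matrix (Fin p) (Fin p) ℝ)
      = Matrix.diagonal (fun q : Fin n × Fin p => w q.1) := by
  ext ⟨i, j⟩ ⟨l, s⟩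
  by_cases h1 : i = l <;> by_cases h2 : j = s <;>
    simp [Matrix.kroneckerMap_apply, Matrix.diagonal_apply, Matrix.one_apply, h1, h2,
      Prod.ext_iff]

lemma kmulVec (A : Matrix (Fin n) (Fin n) ℝ) (z : Fin n × Fin p → ℝ) (i : Fin n) (j : Fin p) :
    ((A ⊗ₖ (1 : Matrix (Fin p) (Fin p) ℝ)).mulVec z) (i, j) = ∑ l, A i l * z (l, j) := by
  rw [Matrix.mulVec, dotProduct]
  rw [Fintype.sum_prod_type]
  refine Finset.sum_congr rfl fun l _ => ?_
  rw [Finset.sum_eq_single j]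
  · simp [Matrix.kroneckerMap_apply, Matrix.one_apply]
  · intro s _ hs
    simp [Matrix.kroneckerMap_apply, Matrix.one_apply, Ne.symm hs]
  · intro h; exact absurd (Finset.mem_univ j) h

/-- spectral bound for a kroneckered row-stochastic matrix -/
lemma stoch_bound {B : Matrix (Fin n) (Fin n) ℝ} (hnn : ∀ i j, 0 ≤ B i j)
    (hrow : ∀ i, ∑ j, B i j = 1) (z : Fin n × Fin p → ℝ) :
    eucNorm ((B ⊗ₖ (1 : Matrix (Fin p) (Fin p) ℝ)).mulVec z)
      ≤ Real.sqrt n * eucNorm z := by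
  have hcs : ∀ (i : Fin n) (j : Fin p),
      (∑ l, B i l * z (l, j)) ^ 2 ≤ ∑ l, B i l * z (l, j) ^ 2 := by
    intro i j
    have h := Finset.sum_mul_sq_le_sq_mul_sq Finset.univ
      (fun l => Real.sqrt (B i l)) (fun l => Real.sqrt (B i l) * z (l, j))
    have e1 : ∀ l, Real.sqrt (B i l) * (Real.sqrt (B i l) * z (l, j)) = B i l * z (l, j) := by
      intro l; rw [← mul_assoc, Real.mul_self_sqrt (hnn i l)]
    have e2 : ∀ l, Real.sqrt (B i l) ^ 2 = B i l := fun l => Real.sq_sqrt (hnn i l)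
    have e3 : ∀ l, (Real.sqrt (B i l) * z (l, j)) ^ 2 = B i l * z (l, j) ^ 2 := by
      intro l; rw [mul_pow, e2]
    simp only [e1, e2, e3] at h
    calc (∑ l, B i l * z (l, j)) ^ 2 ≤ (∑ l, B i l) * ∑ l, B i l * z (l, j) ^ 2 := h
    _ = ∑ l, B i l * z (l, j) ^ 2 := by rw [hrow i, one_mul]
  refine eucNorm_le_of_sq_le (mul_nonneg (Real.sqrt_nonneg _) (eucNorm_nonneg z)) ?_
  have hsq : (Real.sqrt n * eucNorm z) ^ 2 = n * ∑ q, z q ^ 2 := by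
    rw [mul_pow, Real.sq_sqrt (by positivity : (0:ℝ) ≤ (n:ℝ)), sq_eucNorm]
  rw [hsq]
  calc ∑ q : Fin n × Fin p, (((B ⊗ₖ (1 : Matrix (Fin p) (Fin p) ℝ)).mulVec z) q) ^ 2
      = ∑ i, ∑ j, (∑ l, B i l * z (l, j)) ^ 2 := by
        rw [Fintype.sum_prod_type]
        exact Finset.sum_congr rfl fun i _ => Finset.sum_congr rfl fun j _ => by
          rw [kmulVec]
  _ ≤ ∑ i, ∑ j, ∑ l, B i l * z (l, j) ^ 2 := by
        refine Finset.sum_le_sum fun i _ => Finset.sum_le_sum fun j _ => hcs i j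
  _ = ∑ i, ∑ l, B i l * ∑ j, z (l, j) ^ 2 := by
        refine Finset.sum_congr rfl fun i _ => ?_
        refine Eq.trans Finset.sum_comm ?_
        exact Finset.sum_congr rfl fun l _ => (Finset.mul_sum _ _ _).symm
  _ = ∑ l, (∑ i : Fin n, B i l) * ∑ j, z (l, j) ^ 2 := by
        refine Eq.trans Finset.sum_comm ?_
        exact Finset.sum_congr rfl fun l _ => (Finset.sum_mul _ _ _).symm
  _ ≤ ∑ l, (n : ℝ) * ∑ j, z (l, j) ^ 2 := by
        refine Finset.sum_le_sum fun l _ => ?_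
        have hle : (∑ i : Fin n, B i l) ≤ (n : ℝ) := by
          calc (∑ i : Fin n, B i l) ≤ ∑ _i : Fin n, (1:ℝ) :=
                Finset.sum_le_sum fun i _ => by
                  have := hrow i
                  have h2 := Finset.single_le_sum (f := fun j => B i j)
                    (fun s _ => hnn i s) (Finset.mem_univ l)
                  linarith
          _ = n := by simp
        have hjs : (0:ℝ) ≤ ∑ j, z (l, j) ^ 2 :=
          Finset.sum_nonneg fun j _ => sq_nonneg _
        nlinarith
  _ = n * ∑ q, z q ^ 2 := by
        rw [Fintype.sum_prod_type, Finset.mul_sum]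

/-- diagonal operator bound -/
lemma diag_bound {ι : Type*} [Fintype ι] [DecidableEq ι] {w : ι → ℝ} {C : ℝ} (hC : 0 ≤ C)
    (h : ∀ q, |w q| ≤ C) (z : ι → ℝ) :
    eucNorm ((Matrix.diagonal w).mulVec z) ≤ C * eucNorm z := by
  refine eucNorm_le_of_sq_le (mul_nonneg hC (eucNorm_nonneg z)) ?_
  have hsq : (C * eucNorm z) ^ 2 = C ^ 2 * ∑ q, z q ^ 2 := by rw [mul_pow, sq_eucNorm]
  rw [hsq, Finset.mul_sum]
  refine Finset.sum_le_sum fun q _ => ?_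
  rw [Matrix.mulVec_diagonal]
  have h1 : w q ^ 2 ≤ C ^ 2 := by
    have := h q; nlinarith [abs_nonneg (w q), sq_abs (w q)]
  nlinarith [sq_nonneg (z q), sq_nonneg (w q * z q)]

lemma diag_single_norm {ι : Type*} [Fintype ι] [DecidableEq ι] (w : ι → ℝ) (q : ι) :
    eucNorm ((Matrix.diagonal w).mulVec (Pi.single q 1 : ι → ℝ)) = |w q| := by
  have : ∀ r, ((Matrix.diagonal w).mulVec (Pi.single q 1 : ι → ℝ)) r
      = w r * (Pi.single q 1 : ι → ℝ) r := fun r => Matrix.mulVec_diagonal _ _ _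
  rw [eucNorm]
  have hsum : ∑ r, ((Matrix.diagonal w).mulVec (Pi.single q 1 : ι → ℝ)) r ^ 2 = w q ^ 2 := by
    rw [Finset.sum_eq_single q]
    · rw [this q]; simp
    · intro r _ hr; rw [this r]; simp [Pi.single_apply, hr]
    · intro h; exact absurd (Finset.mem_univ q) h
  rw [hsum, Real.sqrt_sq_eq_abs]

end Frsd2


namespace Frsd3
open Frsd Frsd2

variable {n p : ℕ}

section
variable (Rb : Matrix (Fin n) (Fin n) ℝ) (π : Fin n → ℝ)

lemma ofpi_mul_Rb (hπstat : Matrix.vecMul π Rb = π) :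
    (Matrix.of (fun _ j => π j) : Matrix (Fin n) (Fin n) ℝ) * Rb
      = Matrix.of (fun _ j => π j) := by
  ext i j
  rw [Matrix.mul_apply]
  have := congrFun hπstat j
  rw [Matrix.vecMul, dotProduct] at this
  simpa using this

lemma pow_mul_ofpi (hrow : ∀ i, ∑ j, Rb i j = 1) (m : ℕ) :
    Rb ^ m * (Matrix.of (fun _ j => π j) : Matrix (Fin n) (Fin n) ℝ)
      = Matrix.of (fun _ j => π j) := by
  ext i j
  rw [Matrix.mul_apply]
  simp only [Matrix.of_apply]
  rw [← Finset.sum_mul, pow_rowsum hrow m i, one_mul]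

lemma ofpi_mul_ofpi (hπsum : ∑ i, π i = 1) :
    (Matrix.of (fun _ j => π j) : Matrix (Fin n) (Fin n) ℝ) * Matrix.of (fun _ j => π j)
      = Matrix.of (fun _ j => π j) := by
  ext i j
  rw [Matrix.mul_apply]
  simp only [Matrix.of_apply]
  rw [← Finset.sum_mul, hπsum, one_mul]

lemma VinfK_mul_RK (hπstat : Matrix.vecMul π Rb = π) :
    VinfK n p π * RK n p Rb = VinfK n p π := by
  rw [VinfK, RK, kmul, ofpi_mul_Rb Rb π hπstat]

lemma VK_mul_RK (m : ℕ) : VK n p Rb m * RK n p Rb = VK n p Rb (m + 1) := by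
  rw [VK, RK, kmul, ← pow_succ, VK]

lemma VK_mul_VinfK (hrow : ∀ i, ∑ j, Rb i j = 1) (m : ℕ) :
    VK n p Rb m * VinfK n p π = VinfK n p π := by
  rw [VK, VinfK, kmul, pow_mul_ofpi Rb π hrow m]

lemma VinfK_mul_VinfK (hπsum : ∑ i, π i = 1) :
    VinfK n p π * VinfK n p π = VinfK n p π := by
  rw [VinfK, kmul, ofpi_mul_ofpi π hπsum]

lemma RK_eq_VK_one : RK n p Rb = VK n p Rb 1 := by rw [RK, VK, pow_one]

lemma pow_sub_eq (hrow : ∀ i, ∑ j, Rb i j = 1) (hπsum : ∑ i, π i = 1)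
    (hπstat : Matrix.vecMul π Rb = π) :
    ∀ m, 1 ≤ m → (RK n p Rb - VinfK n p π) ^ m = VK n p Rb m - VinfK n p π := by
  intro m hm
  induction m with
  | zero => omega
  | succ m ih =>
      by_cases hm1 : 1 ≤ m
      · rw [pow_succ, ih hm1, sub_mul, mul_sub, mul_sub,
          VK_mul_RK, VK_mul_VinfK Rb π hrow, VinfK_mul_RK Rb π hπstat,
          VinfK_mul_VinfK π hπsum]
        abel
      · have : m = 0 := by omega
        subst this
        rw [zero_add, pow_one, RK_eq_VK_one]

lemma VinfK_mul_Dinf (hπpos : ∀ i, 0 < π i) :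
    VinfK n p π * Matrix.diagonal (fun q : Fin n × Fin p => (π q.1)⁻¹)
      = (Matrix.of (fun _ _ => (1:ℝ)) : Matrix (Fin n) (Fin n) ℝ)
          ⊗ₖ (1 : Matrix (Fin p) (Fin p) ℝ) := by
  have hbase : (Matrix.of (fun _ j => π j) : Matrix (Fin n) (Fin n) ℝ)
      * Matrix.diagonal (fun i => (π i)⁻¹) = Matrix.of (fun _ _ => (1:ℝ)) := by
    ext i j
    rw [Matrix.mul_diagonal]
    simp only [Matrix.of_apply]
    exact mul_inv_cancel₀ (ne_of_gt (hπpos j))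
  have h := kdiag (p := p) (fun i => (π i)⁻¹)
  rw [← h, VinfK, kmul, hbase]

end
end Frsd3
namespace Frsd4
open Frsd Frsd2 Frsd3

lemma opNorm_bound {ι : Type*} [Fintype ι] {N : (ι → ℝ) → ℝ}
    (hhom : ∀ (a : ℝ) z, N (a • z) = |a| * N z) (hdef : ∀ z, N z = 0 ↔ z = 0)
    (hge : ∀ z, eucNorm z ≤ N z) {κ : ℝ} (hκR : ∀ z, N z ≤ κ * eucNorm z)
    (A : Matrix ι ι ℝ) (z : ι → ℝ) : N (A.mulVec z) ≤ opNorm N A * N z := by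
  have hN0 : N (0 : ι → ℝ) = 0 := by
    have := hhom 0 0; simpa using this
  have hNnn : ∀ w, 0 ≤ N w := fun w => le_trans (eucNorm_nonneg w) (hge w)
  by_cases hz : z = 0
  · rw [hz, Matrix.mulVec_zero, hN0, mul_zero]
  · have hNz : 0 < N z := lt_of_le_of_ne (hNnn z) fun h => hz ((hdef z).1 h.symm)
    have hκ0 : 0 ≤ κ := by
      have h1 := hge z; have h2 := hκR z
      have h3 := eucNorm_pos hz
      nlinarith
    obtain ⟨C, hC0, hC⟩ := exists_mulVec_bound A
    have hbdd : BddAbove {c : ℝ | ∃ w : ι → ℝ, w ≠ 0 ∧ c = N (A.mulVec w) / N w} := by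
      refine ⟨κ * C, ?_⟩
      rintro c ⟨w, hw, rfl⟩
      have hNw : 0 < N w := lt_of_le_of_ne (hNnn w) fun h => hw ((hdef w).1 h.symm)
      rw [div_le_iff₀ hNw]
      calc N (A.mulVec w) ≤ κ * eucNorm (A.mulVec w) := hκR _
      _ ≤ κ * (C * eucNorm w) := mul_le_mul_of_nonneg_left (hC w) hκ0
      _ = κ * C * eucNorm w := by ring
      _ ≤ κ * C * N w := mul_le_mul_of_nonneg_left (hge w) (mul_nonneg hκ0 hC0)
    have hmem : N (A.mulVec z) / N z ∈
        {c : ℝ | ∃ w : ι → ℝ, w ≠ 0 ∧ c = N (A.mulVec w) / N w} := ⟨z, hz, rfl⟩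
    have hle := le_csSup hbdd hmem
    rw [opNorm]
    rw [div_le_iff₀ hNz] at hle
    exact le_trans hle (by nlinarith [hNz])

lemma opNorm_pow_bound {ι : Type*} [Fintype ι] [DecidableEq ι] {N : (ι → ℝ) → ℝ}
    {A : Matrix ι ι ℝ} {σ : ℝ} (hσ : 0 ≤ σ)
    (hstep : ∀ z, N (A.mulVec z) ≤ σ * N z) (hNnn : ∀ w, 0 ≤ N w) :
    ∀ (m : ℕ) (z : ι → ℝ), N ((A ^ m).mulVec z) ≤ σ ^ m * N z := by
  intro m
  induction m with
  | zero => intro z; rw [pow_zero, pow_zero, Matrix.one_mulVec, one_mul]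
  | succ m ih =>
      intro z
      rw [pow_succ, ← Matrix.mulVec_mulVec]
      calc N ((A ^ m).mulVec (A.mulVec z)) ≤ σ ^ m * N (A.mulVec z) := ih _
      _ ≤ σ ^ m * (σ * N z) := by
          have := hstep z
          nlinarith [pow_nonneg hσ m, hNnn (A.mulVec z)]
      _ = σ ^ (m + 1) * N z := by ring

lemma eucNorm_blocks {n p : ℕ} (z : Fin n × Fin p → ℝ) :
    ∑ i, (eucNorm fun j => z (i, j)) ^ 2 = eucNorm z ^ 2 := by
  rw [sq_eucNorm, Fintype.sum_prod_type]
  exact Finset.sum_congr rfl fun i _ => sq_eucNorm _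

lemma gradf_lip {n p : ℕ} {g : Fin n → (Fin p → ℝ) → Fin p → ℝ} {L : ℝ} (hL : 0 ≤ L)
    (hLip : ∀ i x x', eucNorm (g i x - g i x') ≤ L * eucNorm (x - x'))
    (z w : Fin n × Fin p → ℝ) :
    eucNorm (gradf g z - gradf g w) ≤ L * eucNorm (z - w) := by
  refine eucNorm_le_of_sq_le (mul_nonneg hL (eucNorm_nonneg _)) ?_
  rw [mul_pow]
  calc ∑ q, (gradf g z - gradf g w) q ^ 2
      = ∑ i, (eucNorm (g i (fun j => z (i, j)) - g i (fun j => w (i, j)))) ^ 2 := by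
        rw [Fintype.sum_prod_type]
        refine Finset.sum_congr rfl fun i _ => ?_
        rw [sq_eucNorm]
        exact Finset.sum_congr rfl fun y _ => rfl
  _ ≤ ∑ i, (L * eucNorm ((fun j => z (i, j)) - fun j => w (i, j))) ^ 2 := by
        refine Finset.sum_le_sum fun i _ => ?_
        exact pow_le_pow_left₀ (eucNorm_nonneg _) (hLip i _ _) 2
  _ = L ^ 2 * ∑ i, (eucNorm fun j => (z - w) (i, j)) ^ 2 := by
        rw [Finset.mul_sum]
        refine Finset.sum_congr rfl fun i _ => ?_
        rw [mul_pow]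
        congr 2
  _ = L ^ 2 * eucNorm (z - w) ^ 2 := by rw [eucNorm_blocks]

lemma grad_sum_zero {n p : ℕ} (f : Fin n → (Fin p → ℝ) → ℝ)
    (g : Fin n → (Fin p → ℝ) → Fin p → ℝ)
    (μ L : ℝ) (hμ : 0 < μ) (hμL : μ ≤ L)
    (hLip : ∀ i x x', eucNorm (g i x - g i x') ≤ L * eucNorm (x - x'))
    (hsc : ∀ i x x',
      f i x + (∑ j, g i x j * (x' j - x j)) + μ / 2 * eucNorm (x' - x) ^ 2 ≤ f i x')
    (xstar : Fin p → ℝ) (hmin : ∀ w, ∑ i, f i xstar ≤ ∑ i, f i w) :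
    ∀ j, (∑ i, g i xstar j) = 0 := by
  have hL : (0:ℝ) ≤ L := le_trans hμ.le hμL
  have key : ∀ u : Fin p → ℝ, 0 ≤ ∑ j, (∑ i, g i xstar j) * u j := by
    intro u
    set K : ℝ := (n : ℝ) * L * eucNorm u ^ 2 with hK
    have hKnn : 0 ≤ K := by positivity
    have hstep : ∀ t : ℝ, 0 < t → -(K * t) ≤ ∑ j, (∑ i, g i xstar j) * u j := by
      intro t ht
      set X : Fin p → ℝ := xstar + t • u with hXdef
      have hXs : X - xstar = t • u := by funext j; simp [hXdef]
      have hsX : xstar - X = (-t) • u := by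
        funext j
        simp only [hXdef, Pi.sub_apply, Pi.add_apply, Pi.smul_apply, smul_eq_mul, neg_smul]
        ring
      have hnorm1 : eucNorm (X - xstar) = t * eucNorm u := by
        rw [hXs, eucNorm_smul, abs_of_pos ht]
      have hnorm2 : eucNorm (xstar - X) = t * eucNorm u := by
        rw [hsX, eucNorm_smul, abs_neg, abs_of_pos ht]
      -- summed strong convexity at X
      have hsum : (∑ i : Fin n, (f i X + (∑ j, g i X j * (xstar j - X j))
            + μ / 2 * eucNorm (xstar - X) ^ 2)) ≤ ∑ i, f i xstar :=
        Finset.sum_le_sum fun i _ => hsc i X xstar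
      have hsplit : (∑ i : Fin n, (f i X + (∑ j, g i X j * (xstar j - X j))
            + μ / 2 * eucNorm (xstar - X) ^ 2))
          = (∑ i, f i X) + (∑ i, ∑ j, g i X j * (xstar j - X j))
            + (n : ℝ) * (μ / 2 * eucNorm (xstar - X) ^ 2) := by
        rw [Finset.sum_add_distrib, Finset.sum_add_distrib, Finset.sum_const,
          nsmul_eq_mul, Finset.card_univ, Fintype.card_fin]
      rw [hsplit] at hsum
      have hmin' := hmin X
      have h2 : (∑ i, ∑ j, g i X j * (xstar j - X j))
          + (n : ℝ) * (μ / 2 * eucNorm (xstar - X) ^ 2) ≤ 0 := by linarith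
      -- rewrite the inner double sum
      have hA : (∑ i, ∑ j, g i X j * (xstar j - X j))
          = -t * ∑ j, (∑ i, g i X j) * u j := by
        have swap : (∑ i, ∑ j, g i X j * (xstar j - X j))
            = ∑ j, ∑ i, g i X j * (xstar j - X j) := Finset.sum_comm
        rw [swap, Finset.mul_sum]
        refine Finset.sum_congr rfl fun j _ => ?_
        have hXj : xstar j - X j = -(t * u j) := by
          simp only [hXdef, Pi.add_apply, Pi.smul_apply, smul_eq_mul]
          ring
        rw [← Finset.sum_mul, hXj]
        ring
      have hSt : 0 ≤ ∑ j, (∑ i, g i X j) * u j := by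
        rw [hA, hnorm2] at h2
        by_contra hS
        push_neg at hS
        have h3 : 0 < t * -(∑ j, (∑ i, g i X j) * u j) := mul_pos ht (by linarith)
        have h4 : 0 ≤ (n : ℝ) * (μ / 2 * (t * eucNorm u) ^ 2) := by positivity
        nlinarith
      -- difference control
      have hdiffle : ∑ j, ((∑ i, g i X j) - (∑ i, g i xstar j)) * u j ≤ K * t := by
        have hCS := sum_mul_le (fun j => (∑ i, g i X j) - (∑ i, g i xstar j)) u
        have hfn : (fun j => (∑ i, g i X j) - (∑ i, g i xstar j))
            = ∑ i, (g i X - g i xstar) := by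
          funext j
          rw [Finset.sum_apply]
          rw [← Finset.sum_sub_distrib]
          rfl
        have hnrm : eucNorm (fun j => (∑ i, g i X j) - (∑ i, g i xstar j))
            ≤ (n : ℝ) * (L * (t * eucNorm u)) := by
          rw [hfn]
          calc eucNorm (∑ i, (g i X - g i xstar))
              ≤ ∑ i : Fin n, eucNorm (g i X - g i xstar) := eucNorm_sum_le _ _
          _ ≤ ∑ _i : Fin n, L * (t * eucNorm u) := by
              refine Finset.sum_le_sum fun i _ => ?_
              calc eucNorm (g i X - g i xstar) ≤ L * eucNorm (X - xstar) := hLip i _ _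
              _ = L * (t * eucNorm u) := by rw [hnorm1]
          _ = (n : ℝ) * (L * (t * eucNorm u)) := by
              rw [Finset.sum_const, nsmul_eq_mul]; congr 1; simp
        calc ∑ j, ((∑ i, g i X j) - (∑ i, g i xstar j)) * u j
            ≤ eucNorm (fun j => (∑ i, g i X j) - (∑ i, g i xstar j)) * eucNorm u := hCS
        _ ≤ (n : ℝ) * (L * (t * eucNorm u)) * eucNorm u := by
            nlinarith [eucNorm_nonneg u]
        _ = K * t := by rw [hK]; ring
      have hsplit : ∑ j, (∑ i, g i xstar j) * u j
          = (∑ j, (∑ i, g i X j) * u j)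
            - ∑ j, ((∑ i, g i X j) - (∑ i, g i xstar j)) * u j := by
        rw [← Finset.sum_sub_distrib]
        refine Finset.sum_congr rfl fun j _ => by ring
      rw [hsplit]
      linarith
    by_contra hc
    push_neg at hc
    set c : ℝ := ∑ j, (∑ i, g i xstar j) * u j with hcdef
    have hpos : (0:ℝ) < K + 1 := by linarith
    have ht : 0 < -c / (K + 1) := div_pos (by linarith) hpos
    have h1 := hstep (-c / (K + 1)) ht
    have h2 : -(K * (-c / (K + 1))) = K * c / (K + 1) := by ring
    rw [h2, div_le_iff₀ hpos] at h1
    nlinarith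
  intro j
  have hneg := key (fun j => -(∑ i, g i xstar j))
  have hsum : ∑ j, (∑ i, g i xstar j) * -(∑ i, g i xstar j)
      = -∑ j, (∑ i, g i xstar j) ^ 2 := by
    rw [← Finset.sum_neg_distrib]
    exact Finset.sum_congr rfl fun j _ => by ring
  rw [hsum] at hneg
  have hzero : ∑ j, (∑ i, g i xstar j) ^ 2 = 0 := by
    have hnn : 0 ≤ ∑ j, (∑ i, g i xstar j) ^ 2 :=
      Finset.sum_nonneg fun j _ => sq_nonneg _
    linarith
  have := (Finset.sum_eq_zero_iff_of_nonneg (fun j _ => sq_nonneg _)).1 hzero j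
    (Finset.mem_univ j)
  exact pow_eq_zero_iff (by norm_num) |>.1 this

end Frsd4
set_option maxHeartbeats 1000000 in
/-- Lemma 4(c): for `k ≥ 1`,
`‖x̂(k) − x̂(k−1)‖ ≤ α v ṽ L ‖x(k)−x(k−1)‖_R + 3 α v ṽ² √n κ₃ σ_R^{k−1} ‖∇f(x(k))‖
  + α nL ‖x(k)−x̂(k)‖_C + α nL ‖x̂(k)−x*_vec‖`. -/
theorem stmt11 (n p : ℕ) (hn : 1 ≤ n) (hp : 1 ≤ p) (Rb : Matrix (Fin n) (Fin n) ℝ)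
    (hnonneg : ∀ i j, 0 ≤ Rb i j) (hrow : ∀ i, ∑ j, Rb i j = 1)
    (hdiag : ∀ i, 0 < Rb i i)
    (hirr : ∀ i j, ∃ k : ℕ, 0 < (Rb ^ k) i j)
    (π : Fin n → ℝ) (hπpos : ∀ i, 0 < π i) (hπsum : ∑ i, π i = 1)
    (hπstat : Matrix.vecMul π Rb = π)
    (f : Fin n → (Fin p → ℝ) → ℝ) (g : Fin n → (Fin p → ℝ) → Fin p → ℝ)
    (μ L : ℝ) (hμ : 0 < μ) (hμL : μ ≤ L)
    (hgrad : ∀ i, IsGradient (f i) (g i))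
    (hLip : ∀ i x x', eucNorm (g i x - g i x') ≤ L * eucNorm (x - x'))
    (hsc : ∀ i x x',
      f i x + (∑ j, g i x j * (x' j - x j)) + μ / 2 * eucNorm (x' - x) ^ 2 ≤ f i x')
    (xstar : Fin p → ℝ)
    (hmin : ∀ w, ∑ i, f i xstar ≤ ∑ i, f i w)
    (huniq : ∀ w, (∀ w', ∑ i, f i w ≤ ∑ i, f i w') → w = xstar)
    (NR NC : (Fin n × Fin p → ℝ) → ℝ)
    (hNRtri : ∀ z w, NR (z + w) ≤ NR z + NR w)
    (hNRhom : ∀ (a : ℝ) z, NR (a • z) = |a| * NR z)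
    (hNRdef : ∀ z, NR z = 0 ↔ z = 0)
    (hNCtri : ∀ z w, NC (z + w) ≤ NC z + NC w)
    (hNChom : ∀ (a : ℝ) z, NC (a • z) = |a| * NC z)
    (hNCdef : ∀ z, NC z = 0 ↔ z = 0)
    (hNRge : ∀ z, eucNorm z ≤ NR z) (hNCge : ∀ z, eucNorm z ≤ NC z)
    (κ₁ κ₂ κ₃ κ₄ : ℝ) (hκ₁ : 0 < κ₁) (hκ₂ : 0 < κ₂) (hκ₃ : 0 < κ₃) (hκ₄ : 0 < κ₄)
    (hκ₁R : ∀ z, NR z ≤ κ₁ * NC z) (hκ₂C : ∀ z, NC z ≤ κ₂ * NR z)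
    (hκ₃R : ∀ z, NR z ≤ κ₃ * eucNorm z) (hκ₄C : ∀ z, NC z ≤ κ₄ * eucNorm z)
    (v vt : ℝ) (hv : v = ⨆ k : ℕ, specNorm (VK n p Rb k))
    (hvt : vt = ⨆ k : ℕ, specNorm (VtinvK n p Rb k))
    (σR : ℝ) (hσRdef : σR = opNorm NR (RK n p Rb - VinfK n p π))
    (hσR0 : 0 < σR) (hσR1 : σR < 1)
    (α β : ℝ) (hα0 : 0 < α) (hβ0 : 0 < β) (hαβ : α * β < 1)
    (x y : ℕ → (Fin n × Fin p → ℝ)) (hy0 : y 0 = 0)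
    (hxrec : ∀ k, x (k + 1) =
      (RK n p Rb).mulVec (x k) - α • (y k + (VtinvK n p Rb k).mulVec (gradf g (x k))))
    (hyrec : ∀ k, y (k + 1) = y k + β • ((1 - RK n p Rb).mulVec (x (k + 1))))
    :
    ∀ k : ℕ, 1 ≤ k →
      eucNorm ((VinfK n p π).mulVec (x k) - (VinfK n p π).mulVec (x (k - 1))) ≤
        α * v * vt * L * NR (x k - x (k - 1))
          + 3 * α * v * vt ^ 2 * Real.sqrt n * κ₃ * σR ^ (k - 1) * eucNorm (gradf g (x k))
          + α * n * L * NC (x k - (VinfK n p π).mulVec (x k))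
          + α * n * L * eucNorm ((VinfK n p π).mulVec (x k) - starVec n p xstar) := by
  classical
  -- basic nonnegativity facts
  have hL0 : (0:ℝ) ≤ L := le_trans hμ.le hμL
  set q0 : Fin n × Fin p := (⟨0, hn⟩, ⟨0, hp⟩) with hq0
  have hκ₃1 : 1 ≤ κ₃ := by
    have h1 := hNRge (Pi.single q0 1)
    have h2 := hκ₃R (Pi.single q0 1)
    rw [Frsd.eucNorm_single] at h1 h2
    linarith
  -- helper : mulVec against a basis vector
  have hmv_single : ∀ (A : Matrix (Fin n × Fin p) (Fin n × Fin p) ℝ) (q r : Fin n × Fin p),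
      (A.mulVec (Pi.single q 1)) r = A r q := by
    intro A q r
    rw [Matrix.mulVec, dotProduct, Finset.sum_eq_single q]
    · simp
    · intro s _ hs; simp [Pi.single_apply, hs]
    · intro h; exact absurd (Finset.mem_univ q) h
  have hsub : ∀ a b : Fin n × Fin p → ℝ, eucNorm (a - b) ≤ eucNorm a + eucNorm b := by
    intro a b
    rw [sub_eq_add_neg]
    exact (Frsd.eucNorm_add_le _ _).trans (by rw [Frsd.eucNorm_neg])
  -- sigma machinery
  have hNRnn : ∀ z, 0 ≤ NR z := fun z => le_trans (Frsd.eucNorm_nonneg z) (hNRge z)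
  have hstepR : ∀ z, NR ((RK n p Rb - VinfK n p π).mulVec z) ≤ σR * NR z := by
    intro z
    rw [hσRdef]
    exact Frsd4.opNorm_bound hNRhom hNRdef hNRge hκ₃R _ z
  have hpowR : ∀ (m : ℕ) (z : Fin n × Fin p → ℝ),
      NR (((RK n p Rb - VinfK n p π) ^ m).mulVec z) ≤ σR ^ m * NR z :=
    Frsd4.opNorm_pow_bound hσR0.le hstepR hNRnn
  have hP1 : ∀ m, 1 ≤ m → ∀ z : Fin n × Fin p → ℝ,
      eucNorm ((VK n p Rb m - VinfK n p π).mulVec z) ≤ κ₃ * σR ^ m * eucNorm z := by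
    intro m hm z
    have hid := Frsd3.pow_sub_eq (p := p) Rb π hrow hπsum hπstat m hm
    calc eucNorm ((VK n p Rb m - VinfK n p π).mulVec z)
        ≤ NR ((VK n p Rb m - VinfK n p π).mulVec z) := hNRge _
    _ = NR (((RK n p Rb - VinfK n p π) ^ m).mulVec z) := by rw [hid]
    _ ≤ σR ^ m * NR z := hpowR m z
    _ ≤ σR ^ m * (κ₃ * eucNorm z) :=
        mul_le_mul_of_nonneg_left (hκ₃R z) (pow_nonneg hσR0.le m)
    _ = κ₃ * σR ^ m * eucNorm z := by ring
  -- diagonal entries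
  have hdpos : ∀ (m : ℕ) (i : Fin n), 0 < (Rb ^ m) i i := fun m i =>
    Frsd2.pow_diag_pos hnonneg hdiag m i
  have hπle1 : ∀ i, π i ≤ 1 := by
    intro i
    have h1 := Finset.single_le_sum (f := π) (fun l _ => (hπpos l).le) (Finset.mem_univ i)
    linarith [hπsum]
  have hentry : ∀ (m : ℕ) (i : Fin n), |(Rb ^ m) i i - π i| ≤ κ₃ * σR ^ m := by
    intro m i
    by_cases hm : 1 ≤ m
    · have h1 := hP1 m hm (Pi.single (i, (⟨0, hp⟩ : Fin p)) 1)
      rw [Frsd.eucNorm_single, mul_one] at h1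
      have h2 := Frsd.abs_le_eucNorm
        ((VK n p Rb m - VinfK n p π).mulVec (Pi.single (i, (⟨0, hp⟩ : Fin p)) 1))
        (i, (⟨0, hp⟩ : Fin p))
      have h3 : ((VK n p Rb m - VinfK n p π).mulVec
          (Pi.single (i, (⟨0, hp⟩ : Fin p)) 1)) (i, (⟨0, hp⟩ : Fin p))
          = (Rb ^ m) i i - π i := by
        rw [hmv_single]
        rw [Matrix.sub_apply]
        rw [VK, VinfK]
        simp [Matrix.kroneckerMap_apply, Matrix.one_apply]
      rw [h3] at h2
      exact h2.trans h1
    · have hm0 : m = 0 := by omega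
      subst hm0
      have h1 : (Rb ^ 0) i i = 1 := Matrix.one_apply_eq i
      rw [h1, pow_zero, mul_one, abs_of_nonneg (by linarith [hπle1 i])]
      linarith [hπpos i]
  -- v facts
  have hVKspec : ∀ k : ℕ, specNorm (VK n p Rb k) ≤ Real.sqrt n := by
    intro k
    refine Frsd.specNorm_le (Real.sqrt_nonneg _) ?_
    intro z
    exact Frsd2.stoch_bound (fun i j => Frsd2.pow_nonneg hnonneg k i j)
      (fun i => Frsd2.pow_rowsum hrow k i) z
  have hVbdd : BddAbove (Set.range fun k => specNorm (VK n p Rb k)) := by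
    refine ⟨Real.sqrt n, ?_⟩
    rintro c ⟨k, rfl⟩
    exact hVKspec k
  have hVKle : ∀ k, specNorm (VK n p Rb k) ≤ v := by
    intro k
    rw [hv]
    exact le_ciSup hVbdd k
  have hVKz : ∀ (k : ℕ) (z : Fin n × Fin p → ℝ),
      eucNorm ((VK n p Rb k).mulVec z) ≤ v * eucNorm z := by
    intro k z
    exact (Frsd.mulVec_le_specNorm _ z).trans
      (mul_le_mul_of_nonneg_right (hVKle k) (Frsd.eucNorm_nonneg z))
  have hv1 : 1 ≤ v := by
    have h1 : VK n p Rb 0 = 1 := by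
      rw [VK, pow_zero]
      exact Matrix.one_kronecker_one
    have h2 := Frsd.le_specNorm (A := VK n p Rb 0) (z := Pi.single q0 1)
      (le_of_eq (Frsd.eucNorm_single q0))
    rw [show (VK n p Rb 0).mulVec (Pi.single q0 1) = Pi.single q0 1 by
        rw [h1, Matrix.one_mulVec], Frsd.eucNorm_single] at h2
    exact h2.trans (hVKle 0)
  have hv0 : (0:ℝ) ≤ v := by linarith
  -- V infinity bound
  have hVinfz : ∀ z : Fin n × Fin p → ℝ,
      eucNorm ((VinfK n p π).mulVec z) ≤ v * eucNorm z := by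
    intro z
    have hbd : ∀ m : ℕ, eucNorm ((VinfK n p π).mulVec z)
        ≤ v * eucNorm z + κ₃ * σR ^ (m + 1) * eucNorm z := by
      intro m
      have hsplit : (VinfK n p π).mulVec z
          = (VK n p Rb (m + 1)).mulVec z - (VK n p Rb (m + 1) - VinfK n p π).mulVec z := by
        rw [Matrix.sub_mulVec]
        abel
      rw [hsplit]
      exact (hsub _ _).trans (add_le_add (hVKz (m + 1) z) (hP1 (m + 1) (by omega) z))
    have h0 : Tendsto (fun m : ℕ => σR ^ m) atTop (nhds 0) :=
      tendsto_pow_atTop_nhds_zero_of_lt_one hσR0.le hσR1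
    have h1 : Tendsto (fun m : ℕ => σR ^ (m + 1)) atTop (nhds 0) := by
      have h2 := h0.mul_const σR
      simp only [zero_mul] at h2
      refine h2.congr fun m => ?_
      rw [pow_succ]
    have h2 := (h1.const_mul κ₃).mul_const (eucNorm z)
    have h3 := h2.const_add (v * eucNorm z)
    simp only [mul_zero, zero_mul, add_zero] at h3
    refine ge_of_tendsto' h3 fun m => ?_
    exact (hbd m).trans (le_of_eq (by ring))
  -- vt facts
  obtain ⟨imin, -, hminπ⟩ :=
    Finset.exists_min_image Finset.univ π ⟨⟨0, hn⟩, Finset.mem_univ _⟩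
  have hδpos : 0 < π imin := hπpos imin
  have hev : ∀ᶠ m in atTop, κ₃ * σR ^ m < π imin / 2 := by
    have h0 : Tendsto (fun m : ℕ => κ₃ * σR ^ m) atTop (nhds 0) := by
      have := (tendsto_pow_atTop_nhds_zero_of_lt_one hσR0.le hσR1).const_mul κ₃
      simpa using this
    exact h0.eventually (gt_mem_nhds (half_pos hδpos))
  obtain ⟨K, hK⟩ := Filter.eventually_atTop.1 hev
  have hTne : ((Finset.range (K + 1)) ×ˢ (Finset.univ : Finset (Fin n))).Nonempty :=
    ⟨(0, ⟨0, hn⟩), by simp⟩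
  set δ0 : ℝ := min (π imin / 2)
    (((Finset.range (K + 1)) ×ˢ (Finset.univ : Finset (Fin n))).inf' hTne
      fun q => (Rb ^ q.1) q.2 q.2) with hδ0
  have hδ0pos : 0 < δ0 := by
    apply lt_min (half_pos hδpos)
    rw [Finset.lt_inf'_iff]
    exact fun b _ => hdpos b.1 b.2
  have hdlb : ∀ (m : ℕ) (i : Fin n), δ0 ≤ (Rb ^ m) i i := by
    intro m i
    by_cases hm : m ≤ K
    · refine le_trans (min_le_right _ _) ?_
      have hmem : (m, i) ∈ (Finset.range (K + 1) ×ˢ (Finset.univ : Finset (Fin n))) := by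
        rw [Finset.mem_product, Finset.mem_range]
        exact ⟨by omega, Finset.mem_univ i⟩
      exact Finset.inf'_le _ hmem
    · push_neg at hm
      have h1 := hK m (by omega)
      have h2 := abs_le.1 (hentry m i)
      have h3 : π imin ≤ π i := hminπ i (Finset.mem_univ i)
      calc δ0 ≤ π imin / 2 := min_le_left _ _
      _ ≤ (Rb ^ m) i i := by linarith [h2.1]
  have hdinvub : ∀ (m : ℕ) (i : Fin n), ((Rb ^ m) i i)⁻¹ ≤ δ0⁻¹ := fun m i =>
    inv_anti₀ hδ0pos (hdlb m i)
  have hVtspec : ∀ m : ℕ, specNorm (VtinvK n p Rb m) ≤ δ0⁻¹ := by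
    intro m
    refine Frsd.specNorm_le (by positivity) ?_
    intro z
    refine Frsd2.diag_bound (by positivity) (fun q => ?_) z
    rw [abs_of_pos (inv_pos.2 (hdpos m q.1))]
    exact hdinvub m q.1
  have hVtbdd : BddAbove (Set.range fun k => specNorm (VtinvK n p Rb k)) := by
    refine ⟨δ0⁻¹, ?_⟩
    rintro c ⟨k, rfl⟩
    exact hVtspec k
  have hVtle : ∀ m : ℕ, specNorm (VtinvK n p Rb m) ≤ vt := by
    intro m
    rw [hvt]
    exact le_ciSup hVtbdd m
  have hVtz : ∀ (m : ℕ) (z : Fin n × Fin p → ℝ),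
      eucNorm ((VtinvK n p Rb m).mulVec z) ≤ vt * eucNorm z := by
    intro m z
    exact (Frsd.mulVec_le_specNorm _ z).trans
      (mul_le_mul_of_nonneg_right (hVtle m) (Frsd.eucNorm_nonneg z))
  have hdinvle : ∀ (m : ℕ) (i : Fin n), ((Rb ^ m) i i)⁻¹ ≤ vt := by
    intro m i
    have h1 := Frsd2.diag_single_norm
      (fun q : Fin n × Fin p => ((Rb ^ m) q.1 q.1)⁻¹) (i, (⟨0, hp⟩ : Fin p))
    have h2 := Frsd.le_specNorm (A := VtinvK n p Rb m)
      (z := Pi.single (i, (⟨0, hp⟩ : Fin p)) 1)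
      (le_of_eq (Frsd.eucNorm_single _))
    rw [VtinvK] at h2
    rw [h1, abs_of_pos (inv_pos.2 (hdpos m i))] at h2
    exact h2.trans (hVtle m)
  have hvt1 : 1 ≤ vt := by
    have h1 := hdinvle 0 ⟨0, hn⟩
    rw [pow_zero, Matrix.one_apply_eq, inv_one] at h1
    exact h1
  have hvt0 : (0:ℝ) ≤ vt := by linarith
  have hπinvle : ∀ i : Fin n, (π i)⁻¹ ≤ vt := by
    intro i
    have hs : Tendsto (fun m : ℕ => κ₃ * σR ^ m) atTop (nhds 0) := by
      have := (tendsto_pow_atTop_nhds_zero_of_lt_one hσR0.le hσR1).const_mul κ₃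
      simpa using this
    have h1 : Tendsto (fun m : ℕ => (Rb ^ m) i i - π i) atTop (nhds 0) :=
      squeeze_zero_norm (fun m => by
        rw [Real.norm_eq_abs]; exact hentry m i) hs
    have hdt : Tendsto (fun m : ℕ => (Rb ^ m) i i) atTop (nhds (π i)) := by
      have h2 := h1.add_const (π i)
      simp only [sub_add_cancel, zero_add] at h2
      exact h2
    have hinv : Tendsto (fun m : ℕ => ((Rb ^ m) i i)⁻¹) atTop (nhds (π i)⁻¹) :=
      hdt.inv₀ (ne_of_gt (hπpos i))
    exact le_of_tendsto hinv (Filter.Eventually.of_forall fun m => hdinvle m i)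
  -- the recursion identities
  have hVinfR : VinfK n p π * RK n p Rb = VinfK n p π := Frsd3.VinfK_mul_RK Rb π hπstat
  have hyV : ∀ j : ℕ, (VinfK n p π).mulVec (y j) = 0 := by
    intro j
    induction j with
    | zero => rw [hy0, Matrix.mulVec_zero]
    | succ j ih =>
        rw [hyrec j, Matrix.mulVec_add, ih, zero_add, Matrix.mulVec_smul,
          Matrix.mulVec_mulVec, Matrix.mul_sub, Matrix.mul_one, hVinfR, sub_self,
          Matrix.zero_mulVec, smul_zero]
  -- main part
  intro k hk
  obtain ⟨m, rfl⟩ : ∃ m, k = m + 1 := ⟨k - 1, by omega⟩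
  simp only [Nat.add_sub_cancel]
  have hid : (VinfK n p π).mulVec (x (m + 1)) - (VinfK n p π).mulVec (x m)
      = -(α • ((VinfK n p π * VtinvK n p Rb m).mulVec (gradf g (x m)))) := by
    rw [hxrec m, Matrix.mulVec_sub, Matrix.mulVec_smul, Matrix.mulVec_add, hyV m, zero_add,
      Matrix.mulVec_mulVec, Matrix.mulVec_mulVec, hVinfR]
    abel
  rw [hid, Frsd.eucNorm_neg, Frsd.eucNorm_smul, abs_of_pos hα0]
  -- decomposition
  have hVD : VinfK n p π * Matrix.diagonal (fun q : Fin n × Fin p => (π q.1)⁻¹)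
      = (Matrix.of (fun _ _ => (1:ℝ)) : Matrix (Fin n) (Fin n) ℝ)
          ⊗ₖ (1 : Matrix (Fin p) (Fin p) ℝ) := Frsd3.VinfK_mul_Dinf π hπpos
  have hdec : (VinfK n p π * VtinvK n p Rb m).mulVec (gradf g (x m))
      = (VinfK n p π * VtinvK n p Rb m).mulVec (gradf g (x m) - gradf g (x (m + 1)))
        + (((VinfK n p π) * (VtinvK n p Rb m
              - Matrix.diagonal (fun q : Fin n × Fin p => (π q.1)⁻¹))).mulVec
            (gradf g (x (m + 1)))
        + ((Matrix.of (fun _ _ => (1:ℝ)) : Matrix (Fin n) (Fin n) ℝ)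
              ⊗ₖ (1 : Matrix (Fin p) (Fin p) ℝ)).mulVec (gradf g (x (m + 1)))) := by
    rw [Matrix.mulVec_sub, Matrix.mul_sub, Matrix.sub_mulVec, hVD]
    abel
  have htri : eucNorm ((VinfK n p π * VtinvK n p Rb m).mulVec (gradf g (x m)))
      ≤ eucNorm ((VinfK n p π * VtinvK n p Rb m).mulVec
            (gradf g (x m) - gradf g (x (m + 1))))
        + (eucNorm (((VinfK n p π) * (VtinvK n p Rb m
              - Matrix.diagonal (fun q : Fin n × Fin p => (π q.1)⁻¹))).mulVec
            (gradf g (x (m + 1))))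
        + eucNorm (((Matrix.of (fun _ _ => (1:ℝ)) : Matrix (Fin n) (Fin n) ℝ)
              ⊗ₖ (1 : Matrix (Fin p) (Fin p) ℝ)).mulVec (gradf g (x (m + 1))))) := by
    rw [hdec]
    exact (Frsd.eucNorm_add_le _ _).trans
      (add_le_add (le_refl _) (Frsd.eucNorm_add_le _ _))
  -- T1
  have hT1 : eucNorm ((VinfK n p π * VtinvK n p Rb m).mulVec
        (gradf g (x m) - gradf g (x (m + 1))))
      ≤ v * vt * L * NR (x (m + 1) - x m) := by
    rw [← Matrix.mulVec_mulVec]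
    calc eucNorm ((VinfK n p π).mulVec ((VtinvK n p Rb m).mulVec
          (gradf g (x m) - gradf g (x (m + 1)))))
        ≤ v * eucNorm ((VtinvK n p Rb m).mulVec (gradf g (x m) - gradf g (x (m + 1)))) :=
          hVinfz _
    _ ≤ v * (vt * eucNorm (gradf g (x m) - gradf g (x (m + 1)))) :=
        mul_le_mul_of_nonneg_left (hVtz m _) hv0
    _ ≤ v * (vt * (L * eucNorm (x m - x (m + 1)))) :=
        mul_le_mul_of_nonneg_left
          (mul_le_mul_of_nonneg_left (Frsd4.gradf_lip hL0 hLip _ _) hvt0) hv0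
    _ = v * vt * L * eucNorm (x (m + 1) - x m) := by
        rw [Frsd.eucNorm_sub_rev]; ring
    _ ≤ v * vt * L * NR (x (m + 1) - x m) := by
        have h1 := hNRge (x (m + 1) - x m)
        have h2 : 0 ≤ v * vt * L := by positivity
        nlinarith
  -- T2
  have hT2 : eucNorm (((VinfK n p π) * (VtinvK n p Rb m
        - Matrix.diagonal (fun q : Fin n × Fin p => (π q.1)⁻¹))).mulVec
        (gradf g (x (m + 1))))
      ≤ v * vt ^ 2 * κ₃ * σR ^ m * eucNorm (gradf g (x (m + 1))) := by
    rw [← Matrix.mulVec_mulVec]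
    have hform : VtinvK n p Rb m - Matrix.diagonal (fun q : Fin n × Fin p => (π q.1)⁻¹)
        = Matrix.diagonal (fun q : Fin n × Fin p => ((Rb ^ m) q.1 q.1)⁻¹ - (π q.1)⁻¹) := by
      rw [VtinvK, Matrix.diagonal_sub]
    have hC0 : (0:ℝ) ≤ vt ^ 2 * (κ₃ * σR ^ m) :=
      mul_nonneg (sq_nonneg vt) (mul_nonneg hκ₃.le (pow_nonneg hσR0.le m))
    have hder : ∀ q : Fin n × Fin p,
        |((Rb ^ m) q.1 q.1)⁻¹ - (π q.1)⁻¹| ≤ vt ^ 2 * (κ₃ * σR ^ m) := by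
      intro q
      have hdq := hdpos m q.1
      have hπq := hπpos q.1
      have h1 : ((Rb ^ m) q.1 q.1)⁻¹ - (π q.1)⁻¹
          = (π q.1 - (Rb ^ m) q.1 q.1) * (((Rb ^ m) q.1 q.1)⁻¹ * (π q.1)⁻¹) := by
        field_simp
      rw [h1, abs_mul, abs_mul]
      have h2 : |π q.1 - (Rb ^ m) q.1 q.1| ≤ κ₃ * σR ^ m := by
        rw [abs_sub_comm]; exact hentry m q.1
      have h3 : |((Rb ^ m) q.1 q.1)⁻¹| ≤ vt := by
        rw [abs_of_pos (inv_pos.2 hdq)]; exact hdinvle m q.1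
      have h4 : |(π q.1)⁻¹| ≤ vt := by
        rw [abs_of_pos (inv_pos.2 hπq)]; exact hπinvle q.1
      have ha2 : (0:ℝ) ≤ |((Rb ^ m) q.1 q.1)⁻¹| := abs_nonneg _
      have ha3 : (0:ℝ) ≤ |(π q.1)⁻¹| := abs_nonneg _
      have h5 : |((Rb ^ m) q.1 q.1)⁻¹| * |(π q.1)⁻¹| ≤ vt * vt :=
        mul_le_mul h3 h4 ha3 hvt0
      have h6 := mul_le_mul h2 h5 (mul_nonneg ha2 ha3)
        (mul_nonneg hκ₃.le (pow_nonneg hσR0.le m))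
      calc |π q.1 - (Rb ^ m) q.1 q.1| * (|((Rb ^ m) q.1 q.1)⁻¹| * |(π q.1)⁻¹|)
          ≤ κ₃ * σR ^ m * (vt * vt) := h6
      _ = vt ^ 2 * (κ₃ * σR ^ m) := by ring
    calc eucNorm ((VinfK n p π).mulVec ((VtinvK n p Rb m
            - Matrix.diagonal (fun q : Fin n × Fin p => (π q.1)⁻¹)).mulVec
          (gradf g (x (m + 1)))))
        ≤ v * eucNorm ((VtinvK n p Rb m
            - Matrix.diagonal (fun q : Fin n × Fin p => (π q.1)⁻¹)).mulVec
          (gradf g (x (m + 1)))) := hVinfz _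
    _ ≤ v * ((vt ^ 2 * (κ₃ * σR ^ m)) * eucNorm (gradf g (x (m + 1)))) := by
        refine mul_le_mul_of_nonneg_left ?_ hv0
        rw [hform]
        exact Frsd2.diag_bound hC0 hder _
    _ = v * vt ^ 2 * κ₃ * σR ^ m * eucNorm (gradf g (x (m + 1))) := by ring
  -- T3
  have hgz : ∀ j, (∑ l, g l xstar j) = 0 :=
    Frsd4.grad_sum_zero f g μ L hμ hμL hLip hsc xstar hmin
  have hxhat : ∀ (i : Fin n) (j : Fin p),
      ((VinfK n p π).mulVec (x (m + 1))) (i, j) = ∑ l, π l * x (m + 1) (l, j) := by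
    intro i j
    rw [VinfK, Frsd2.kmulVec]
    simp
  have hEMG : ((Matrix.of (fun _ _ => (1:ℝ)) : Matrix (Fin n) (Fin n) ℝ)
        ⊗ₖ (1 : Matrix (Fin p) (Fin p) ℝ)).mulVec (gradf g (x (m + 1)))
      = fun q : Fin n × Fin p => ∑ l, g l (fun j' => x (m + 1) (l, j')) q.2 := by
    funext q
    obtain ⟨i, j⟩ := q
    rw [Frsd2.kmulVec]
    simp only [Matrix.of_apply, one_mul]
    rfl
  have hT3 : eucNorm (((Matrix.of (fun _ _ => (1:ℝ)) : Matrix (Fin n) (Fin n) ℝ)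
        ⊗ₖ (1 : Matrix (Fin p) (Fin p) ℝ)).mulVec (gradf g (x (m + 1))))
      ≤ (n:ℝ) * L * NC (x (m + 1) - (VinfK n p π).mulVec (x (m + 1)))
        + (n:ℝ) * L * eucNorm ((VinfK n p π).mulVec (x (m + 1)) - starVec n p xstar) := by
    set Sv : Fin p → ℝ := fun j => ∑ l, g l (fun j' => x (m + 1) (l, j')) j with hSv
    set xb : Fin p → ℝ := fun j => ∑ l, π l * x (m + 1) (l, j) with hxb
    have hnn : Real.sqrt n * Real.sqrt n = (n:ℝ) := Real.mul_self_sqrt (Nat.cast_nonneg n)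
    -- norm of EM G
    have hEMnorm : eucNorm (((Matrix.of (fun _ _ => (1:ℝ)) : Matrix (Fin n) (Fin n) ℝ)
          ⊗ₖ (1 : Matrix (Fin p) (Fin p) ℝ)).mulVec (gradf g (x (m + 1))))
        = Real.sqrt n * eucNorm Sv := by
      rw [hEMG]
      rw [eucNorm, eucNorm]
      have h1 : ∑ q : Fin n × Fin p,
          ((fun q : Fin n × Fin p => ∑ l, g l (fun j' => x (m + 1) (l, j')) q.2) q) ^ 2
          = (n:ℝ) * ∑ j, Sv j ^ 2 := by
        rw [Fintype.sum_prod_type]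
        have h0 : ∀ i : Fin n, (∑ j, ((fun q : Fin n × Fin p =>
            ∑ l, g l (fun j' => x (m + 1) (l, j')) q.2) (i, j)) ^ 2)
            = ∑ j, Sv j ^ 2 := fun i => rfl
        rw [Finset.sum_congr rfl fun i _ => h0 i, Finset.sum_const, nsmul_eq_mul,
          Finset.card_univ, Fintype.card_fin]
      rw [h1, Real.sqrt_mul (Nat.cast_nonneg n)]
    rw [hEMnorm]
    -- split Sv
    have hSvsplit : Sv = (∑ l, (g l (fun j' => x (m + 1) (l, j')) - g l xb))
        + (∑ l, (g l xb - g l xstar)) := by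
      funext j
      rw [Pi.add_apply, Finset.sum_apply, Finset.sum_apply]
      simp only [Pi.sub_apply]
      rw [← Finset.sum_add_distrib]
      have h2 : ∀ l, (g l (fun j' => x (m + 1) (l, j')) j - g l xb j)
          + (g l xb j - g l xstar j) = g l (fun j' => x (m + 1) (l, j')) j - g l xstar j :=
        fun l => by ring
      rw [Finset.sum_congr rfl fun l _ => h2 l, Finset.sum_sub_distrib, hgz j, sub_zero]
    -- block functions
    have hblock : ∀ l : Fin n, (fun j => (x (m + 1)
          - (VinfK n p π).mulVec (x (m + 1))) (l, j))
        = (fun j' => x (m + 1) (l, j')) - xb := by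
      intro l
      funext j
      simp only [Pi.sub_apply]
      rw [hxhat l j]
    -- part a
    have hA : eucNorm (∑ l, (g l (fun j' => x (m + 1) (l, j')) - g l xb))
        ≤ L * (Real.sqrt n
          * eucNorm (x (m + 1) - (VinfK n p π).mulVec (x (m + 1)))) := by
      calc eucNorm (∑ l, (g l (fun j' => x (m + 1) (l, j')) - g l xb))
          ≤ ∑ l, eucNorm (g l (fun j' => x (m + 1) (l, j')) - g l xb) :=
            Frsd.eucNorm_sum_le _ _
      _ ≤ ∑ l, L * eucNorm ((fun j' => x (m + 1) (l, j')) - xb) :=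
          Finset.sum_le_sum fun l _ => hLip l _ _
      _ = L * ∑ l, eucNorm ((fun j' => x (m + 1) (l, j')) - xb) := by
          rw [Finset.mul_sum]
      _ ≤ L * (Real.sqrt n
            * eucNorm (x (m + 1) - (VinfK n p π).mulVec (x (m + 1)))) := by
          refine mul_le_mul_of_nonneg_left ?_ hL0
          have hCS := Frsd.sum_mul_le (fun _ : Fin n => (1:ℝ))
            (fun l => eucNorm ((fun j' => x (m + 1) (l, j')) - xb))
          have hones : eucNorm (fun _ : Fin n => (1:ℝ)) = Real.sqrt n := by
            rw [eucNorm]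
            congr 1
            simp
          have hblocknorm : eucNorm
              (fun l => eucNorm ((fun j' => x (m + 1) (l, j')) - xb))
              = eucNorm (x (m + 1) - (VinfK n p π).mulVec (x (m + 1))) := by
            rw [eucNorm]
            have h4 : ∑ l : Fin n, (eucNorm ((fun j' => x (m + 1) (l, j')) - xb)) ^ 2
                = eucNorm (x (m + 1) - (VinfK n p π).mulVec (x (m + 1))) ^ 2 := by
              rw [← Frsd4.eucNorm_blocks (x (m + 1) - (VinfK n p π).mulVec (x (m + 1)))]
              exact Finset.sum_congr rfl fun l _ => by rw [hblock l]
            rw [h4, Real.sqrt_sq (Frsd.eucNorm_nonneg _)]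
          rw [hones, hblocknorm] at hCS
          calc ∑ l, eucNorm ((fun j' => x (m + 1) (l, j')) - xb)
              = ∑ l, (1:ℝ) * eucNorm ((fun j' => x (m + 1) (l, j')) - xb) := by
                refine Finset.sum_congr rfl fun l _ => ?_
                rw [one_mul]
          _ ≤ Real.sqrt n * eucNorm (x (m + 1) - (VinfK n p π).mulVec (x (m + 1))) := hCS
    -- part b
    have hstarnorm : eucNorm ((VinfK n p π).mulVec (x (m + 1)) - starVec n p xstar)
        = Real.sqrt n * eucNorm (xb - xstar) := by
      rw [eucNorm, eucNorm]
      have h5 : ∑ q : Fin n × Fin p,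
          ((VinfK n p π).mulVec (x (m + 1)) - starVec n p xstar) q ^ 2
          = (n:ℝ) * ∑ j, (xb - xstar) j ^ 2 := by
        rw [Fintype.sum_prod_type]
        have h6 : ∀ i : Fin n, ∑ j : Fin p,
            ((VinfK n p π).mulVec (x (m + 1)) - starVec n p xstar) (i, j) ^ 2
            = ∑ j, (xb - xstar) j ^ 2 := by
          intro i
          refine Finset.sum_congr rfl fun j _ => ?_
          simp only [Pi.sub_apply]
          rw [hxhat i j]
          rfl
        rw [Finset.sum_congr rfl fun i _ => h6 i, Finset.sum_const, nsmul_eq_mul,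
          Finset.card_univ, Fintype.card_fin]
      rw [h5, Real.sqrt_mul (Nat.cast_nonneg n)]
    have hB : eucNorm (∑ l, (g l xb - g l xstar))
        ≤ L * (Real.sqrt n
          * eucNorm ((VinfK n p π).mulVec (x (m + 1)) - starVec n p xstar)) := by
      calc eucNorm (∑ l, (g l xb - g l xstar))
          ≤ ∑ l : Fin n, eucNorm (g l xb - g l xstar) := Frsd.eucNorm_sum_le _ _
      _ ≤ ∑ _l : Fin n, L * eucNorm (xb - xstar) :=
          Finset.sum_le_sum fun l _ => hLip l _ _
      _ = (n:ℝ) * (L * eucNorm (xb - xstar)) := by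
          rw [Finset.sum_const, nsmul_eq_mul, Finset.card_univ, Fintype.card_fin]
      _ = L * (Real.sqrt n * (Real.sqrt n * eucNorm (xb - xstar))) := by
          linear_combination (-(L * eucNorm (xb - xstar))) * hnn
      _ = L * (Real.sqrt n
            * eucNorm ((VinfK n p π).mulVec (x (m + 1)) - starVec n p xstar)) := by
          rw [hstarnorm]
    -- combine
    have hSvbound : eucNorm Sv
        ≤ L * (Real.sqrt n * eucNorm (x (m + 1) - (VinfK n p π).mulVec (x (m + 1))))
          + L * (Real.sqrt n
            * eucNorm ((VinfK n p π).mulVec (x (m + 1)) - starVec n p xstar)) := by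
      rw [hSvsplit]
      exact (Frsd.eucNorm_add_le _ _).trans (add_le_add hA hB)
    have hNCge' := hNCge (x (m + 1) - (VinfK n p π).mulVec (x (m + 1)))
    calc Real.sqrt n * eucNorm Sv
        ≤ Real.sqrt n
          * (L * (Real.sqrt n * eucNorm (x (m + 1) - (VinfK n p π).mulVec (x (m + 1))))
            + L * (Real.sqrt n
              * eucNorm ((VinfK n p π).mulVec (x (m + 1)) - starVec n p xstar))) :=
          mul_le_mul_of_nonneg_left hSvbound (Real.sqrt_nonneg _)
    _ = (n:ℝ) * L * eucNorm (x (m + 1) - (VinfK n p π).mulVec (x (m + 1)))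
          + (n:ℝ) * L * eucNorm ((VinfK n p π).mulVec (x (m + 1)) - starVec n p xstar) := by
        linear_combination (L * eucNorm (x (m + 1) - (VinfK n p π).mulVec (x (m + 1)))
          + L * eucNorm ((VinfK n p π).mulVec (x (m + 1)) - starVec n p xstar)) * hnn
    _ ≤ (n:ℝ) * L * NC (x (m + 1) - (VinfK n p π).mulVec (x (m + 1)))
          + (n:ℝ) * L * eucNorm ((VinfK n p π).mulVec (x (m + 1)) - starVec n p xstar) := by
        have h7 : (0:ℝ) ≤ (n:ℝ) * L := by positivity
        have h8 := mul_le_mul_of_nonneg_left hNCge' h7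
        linarith
  -- final combination
  have hsqrtn1 : (1:ℝ) ≤ Real.sqrt n := by
    rw [show (1:ℝ) = Real.sqrt 1 from (Real.sqrt_one).symm]
    exact Real.sqrt_le_sqrt (by exact_mod_cast hn)
  have hmid : v * vt ^ 2 * κ₃ * σR ^ m * eucNorm (gradf g (x (m + 1)))
      ≤ 3 * v * vt ^ 2 * Real.sqrt n * κ₃ * σR ^ m * eucNorm (gradf g (x (m + 1))) := by
    have hF : 0 ≤ v * vt ^ 2 * κ₃ * σR ^ m * eucNorm (gradf g (x (m + 1))) := by
      have h1 := pow_nonneg hσR0.le m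
      have h2 := Frsd.eucNorm_nonneg (gradf g (x (m + 1)))
      have h3 : (0:ℝ) ≤ vt ^ 2 := sq_nonneg vt
      have h4 : (0:ℝ) ≤ v * vt ^ 2 := mul_nonneg hv0 h3
      have h5 : (0:ℝ) ≤ v * vt ^ 2 * κ₃ := mul_nonneg h4 hκ₃.le
      have h6 : (0:ℝ) ≤ v * vt ^ 2 * κ₃ * σR ^ m := mul_nonneg h5 h1
      exact mul_nonneg h6 h2
    have h7 : (1:ℝ) ≤ 3 * Real.sqrt n := by linarith
    calc v * vt ^ 2 * κ₃ * σR ^ m * eucNorm (gradf g (x (m + 1)))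
        = 1 * (v * vt ^ 2 * κ₃ * σR ^ m * eucNorm (gradf g (x (m + 1)))) := (one_mul _).symm
    _ ≤ (3 * Real.sqrt n) * (v * vt ^ 2 * κ₃ * σR ^ m * eucNorm (gradf g (x (m + 1)))) :=
        mul_le_mul_of_nonneg_right h7 hF
    _ = 3 * v * vt ^ 2 * Real.sqrt n * κ₃ * σR ^ m
          * eucNorm (gradf g (x (m + 1))) := by ring
  have hfinal : eucNorm ((VinfK n p π * VtinvK n p Rb m).mulVec (gradf g (x m)))
      ≤ v * vt * L * NR (x (m + 1) - x m)
        + (3 * v * vt ^ 2 * Real.sqrt n * κ₃ * σR ^ m * eucNorm (gradf g (x (m + 1)))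
        + ((n:ℝ) * L * NC (x (m + 1) - (VinfK n p π).mulVec (x (m + 1)))
          + (n:ℝ) * L * eucNorm ((VinfK n p π).mulVec (x (m + 1)) - starVec n p xstar))) :=
    htri.trans (add_le_add hT1 (add_le_add (hT2.trans hmid) hT3))
  calc α * eucNorm ((VinfK n p π * VtinvK n p Rb m).mulVec (gradf g (x m)))
      ≤ α * (v * vt * L * NR (x (m + 1) - x m)
        + (3 * v * vt ^ 2 * Real.sqrt n * κ₃ * σR ^ m * eucNorm (gradf g (x (m + 1)))
        + ((n:ℝ) * L * NC (x (m + 1) - (VinfK n p π).mulVec (x (m + 1)))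
          + (n:ℝ) * L * eucNorm ((VinfK n p π).mulVec (x (m + 1)) - starVec n p xstar)))) :=
        mul_le_mul_of_nonneg_left hfinal hα0.le
  _ = α * v * vt * L * NR (x (m + 1) - x m)
        + 3 * α * v * vt ^ 2 * Real.sqrt n * κ₃ * σR ^ m * eucNorm (gradf g (x (m + 1)))
        + α * (n:ℝ) * L * NC (x (m + 1) - (VinfK n p π).mulVec (x (m + 1)))
        + α * (n:ℝ) * L * eucNorm ((VinfK n p π).mulVec (x (m + 1)) - starVec n p xstar) := by
      ring
end

section
/- For every k ≥ 1 and all z, z' ∈ ℝ^{np}: ‖Ṽ(k)^{-1} ∇f(z) − Ṽ(k−1)^{-1} ∇f(z')‖ ≤ ṽ L ‖z − z'‖_R + 2 ṽ² √n κ₃ σ_R^{k−1} ‖∇f(z)‖. -/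
open Matrix Filter
open scoped Kronecker

section AuxLemmas
open Finset
variable {ι : Type*} [Fintype ι]

lemma eucNorm_nonneg (z : ι → ℝ) : 0 ≤ eucNorm z := Real.sqrt_nonneg _

lemma eucNorm_sq (z : ι → ℝ) : eucNorm z ^ 2 = ∑ i, z i ^ 2 :=
  Real.sq_sqrt (Finset.sum_nonneg fun i _ => sq_nonneg _)

lemma eucNorm_eq_zero_iff {z : ι → ℝ} : eucNorm z = 0 ↔ z = 0 := by
  unfold eucNorm
  rw [Real.sqrt_eq_zero (Finset.sum_nonneg fun i _ => sq_nonneg _)]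
  constructor
  · intro h; funext i
    have := (Finset.sum_eq_zero_iff_of_nonneg (fun i _ => sq_nonneg (z i))).mp h i (mem_univ i)
    exact pow_eq_zero_iff (two_ne_zero) |>.mp this
  · rintro rfl; simp

lemma eucNorm_pos {z : ι → ℝ} (h : z ≠ 0) : 0 < eucNorm z :=
  (eucNorm_nonneg z).lt_of_ne fun e => h (eucNorm_eq_zero_iff.mp e.symm)

lemma eucNorm_le_of_sq_le {z : ι → ℝ} {a : ℝ} (ha : 0 ≤ a) (h : ∑ i, z i ^ 2 ≤ a ^ 2) :
    eucNorm z ≤ a := by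
  unfold eucNorm
  calc Real.sqrt (∑ i, z i ^ 2) ≤ Real.sqrt (a ^ 2) := Real.sqrt_le_sqrt h
  _ = a := by rw [Real.sqrt_sq ha]

lemma abs_le_eucNorm (z : ι → ℝ) (i : ι) : |z i| ≤ eucNorm z := by
  rw [← Real.sqrt_sq_eq_abs]
  exact Real.sqrt_le_sqrt
    (Finset.single_le_sum (f := fun j => z j ^ 2) (fun j _ => sq_nonneg _) (mem_univ i))

lemma eucNorm_smul (a : ℝ) (z : ι → ℝ) : eucNorm (a • z) = |a| * eucNorm z := by
  unfold eucNorm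
  have h : ∑ i, (a • z) i ^ 2 = a ^ 2 * ∑ i, z i ^ 2 := by
    simp [smul_eq_mul, mul_pow, Finset.mul_sum]
  rw [h, Real.sqrt_mul (sq_nonneg a), Real.sqrt_sq_eq_abs]

lemma eucNorm_inner_le (x y : ι → ℝ) : ∑ i, x i * y i ≤ eucNorm x * eucNorm y := by
  have h := Finset.sum_mul_sq_le_sq_mul_sq Finset.univ x y
  calc ∑ i, x i * y i ≤ |∑ i, x i * y i| := le_abs_self _
    _ = Real.sqrt ((∑ i, x i * y i) ^ 2) := (Real.sqrt_sq_eq_abs _).symm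
    _ ≤ Real.sqrt ((∑ i, x i ^ 2) * ∑ i, y i ^ 2) := Real.sqrt_le_sqrt h
    _ = eucNorm x * eucNorm y := by
        rw [Real.sqrt_mul (Finset.sum_nonneg fun i _ => sq_nonneg _)]; rfl

lemma eucNorm_add_le (x y : ι → ℝ) : eucNorm (x + y) ≤ eucNorm x + eucNorm y := by
  apply eucNorm_le_of_sq_le (add_nonneg (eucNorm_nonneg x) (eucNorm_nonneg y))
  have h1 : ∑ i, (x + y) i ^ 2 = (∑ i, x i ^ 2) + 2 * (∑ i, x i * y i) + ∑ i, y i ^ 2 := by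
    simp only [Pi.add_apply, add_sq, Finset.sum_add_distrib, Finset.mul_sum, mul_assoc]
  have h2 := eucNorm_inner_le x y
  have h3 := eucNorm_sq x
  have h4 := eucNorm_sq y
  nlinarith [eucNorm_nonneg x, eucNorm_nonneg y]

lemma eucNorm_mulVec_le (A : Matrix ι ι ℝ) (y : ι → ℝ) :
    eucNorm (A.mulVec y) ≤ Real.sqrt (∑ q, ∑ r, A q r ^ 2) * eucNorm y := by
  apply eucNorm_le_of_sq_le (mul_nonneg (Real.sqrt_nonneg _) (eucNorm_nonneg _))
  rw [mul_pow, Real.sq_sqrt (by positivity), eucNorm_sq]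
  calc ∑ q, (A.mulVec y) q ^ 2 = ∑ q, (∑ r, A q r * y r) ^ 2 := by
        simp [Matrix.mulVec, dotProduct]
    _ ≤ ∑ q, (∑ r, A q r ^ 2) * (∑ r, y r ^ 2) :=
        Finset.sum_le_sum fun q _ => Finset.sum_mul_sq_le_sq_mul_sq _ _ _
    _ = (∑ q, ∑ r, A q r ^ 2) * ∑ r, y r ^ 2 := by rw [← Finset.sum_mul]

lemma eucNorm_diagonal_mulVec_le [DecidableEq ι] {d : ι → ℝ} {M : ℝ} (hM0 : 0 ≤ M)
    (hM : ∀ q, |d q| ≤ M) (y : ι → ℝ) :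
    eucNorm ((Matrix.diagonal d).mulVec y) ≤ M * eucNorm y := by
  apply eucNorm_le_of_sq_le (mul_nonneg hM0 (eucNorm_nonneg _))
  rw [mul_pow, eucNorm_sq, Finset.mul_sum]
  apply Finset.sum_le_sum; intro q _
  rw [Matrix.mulVec_diagonal, mul_pow]
  apply mul_le_mul_of_nonneg_right _ (sq_nonneg _)
  calc d q ^ 2 = |d q| ^ 2 := (sq_abs _).symm
  _ ≤ M ^ 2 := pow_le_pow_left₀ (abs_nonneg _) (hM q) 2

lemma bddAbove_specSet {A : Matrix ι ι ℝ} {C : ℝ} (hC0 : 0 ≤ C)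
    (hC : ∀ y, eucNorm (A.mulVec y) ≤ C * eucNorm y) :
    BddAbove {c : ℝ | ∃ z : ι → ℝ, eucNorm z ≤ 1 ∧ c = eucNorm (A.mulVec z)} := by
  refine ⟨C, ?_⟩
  rintro c ⟨z, hz, rfl⟩
  calc eucNorm (A.mulVec z) ≤ C * eucNorm z := hC z
  _ ≤ C * 1 := mul_le_mul_of_nonneg_left hz hC0
  _ = C := mul_one C

lemma eucNorm_zero : eucNorm (0 : ι → ℝ) = 0 := by simp [eucNorm]

lemma specNorm_le_of_bound {A : Matrix ι ι ℝ} {C : ℝ} (hC0 : 0 ≤ C)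
    (hC : ∀ y, eucNorm (A.mulVec y) ≤ C * eucNorm y) : specNorm A ≤ C := by
  have hne : Set.Nonempty {c : ℝ | ∃ z : ι → ℝ, eucNorm z ≤ 1 ∧ c = eucNorm (A.mulVec z)} :=
    ⟨eucNorm (A.mulVec 0), 0, by rw [eucNorm_zero]; norm_num, rfl⟩
  apply csSup_le hne
  rintro c ⟨z, hz, rfl⟩
  calc eucNorm (A.mulVec z) ≤ C * eucNorm z := hC z
  _ ≤ C * 1 := mul_le_mul_of_nonneg_left hz hC0
  _ = C := mul_one C

lemma le_specNorm_of_unit {A : Matrix ι ι ℝ} {C : ℝ} (hC0 : 0 ≤ C)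
    (hC : ∀ y, eucNorm (A.mulVec y) ≤ C * eucNorm y) {z : ι → ℝ} (hz : eucNorm z ≤ 1) :
    eucNorm (A.mulVec z) ≤ specNorm A :=
  le_csSup (bddAbove_specSet hC0 hC) ⟨z, hz, rfl⟩

lemma specNorm_nonneg' {A : Matrix ι ι ℝ} {C : ℝ} (hC0 : 0 ≤ C)
    (hC : ∀ y, eucNorm (A.mulVec y) ≤ C * eucNorm y) : 0 ≤ specNorm A := by
  have h := le_specNorm_of_unit hC0 hC (z := 0) (by rw [eucNorm_zero]; norm_num)
  calc (0:ℝ) = eucNorm (A.mulVec 0) := by rw [Matrix.mulVec_zero, eucNorm_zero]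
  _ ≤ specNorm A := h

lemma mulVec_le_specNorm {A : Matrix ι ι ℝ} {C : ℝ} (hC0 : 0 ≤ C)
    (hC : ∀ y, eucNorm (A.mulVec y) ≤ C * eucNorm y) (y : ι → ℝ) :
    eucNorm (A.mulVec y) ≤ specNorm A * eucNorm y := by
  by_cases hy : y = 0
  · subst hy
    rw [Matrix.mulVec_zero, eucNorm_zero, mul_zero]
  · have hz : 0 < eucNorm y := eucNorm_pos hy
    have hmem : eucNorm ((eucNorm y)⁻¹ • y) ≤ 1 := by
      rw [eucNorm_smul, abs_inv, abs_of_pos hz, inv_mul_cancel₀ hz.ne']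
    have hle := le_specNorm_of_unit hC0 hC hmem
    rw [Matrix.mulVec_smul, eucNorm_smul, abs_inv, abs_of_pos hz] at hle
    calc eucNorm (A.mulVec y)
        = eucNorm y * ((eucNorm y)⁻¹ * eucNorm (A.mulVec y)) := by field_simp
    _ ≤ eucNorm y * specNorm A := mul_le_mul_of_nonneg_left hle hz.le
    _ = specNorm A * eucNorm y := mul_comm _ _

lemma eucNorm_single [DecidableEq ι] (q0 : ι) (a : ℝ) :
    eucNorm (fun q => if q = q0 then a else 0) = |a| := by
  unfold eucNorm
  have h : ∀ q, (if q = q0 then a else 0) ^ 2 = if q = q0 then a ^ 2 else 0 := by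
    intro q; split <;> simp
  simp_rw [h]
  rw [Finset.sum_ite_eq' Finset.univ q0 (fun _ => a ^ 2), if_pos (mem_univ q0),
    Real.sqrt_sq_eq_abs]

end AuxLemmas

set_option maxHeartbeats 2000000 in
/-- Lemma 4(d): for `k ≥ 1` and all `z, z'`,
`‖Ṽ(k)⁻¹∇f(z) − Ṽ(k−1)⁻¹∇f(z')‖ ≤ ṽ L ‖z − z'‖_R + 2 ṽ² √n κ₃ σ_R^{k−1} ‖∇f(z)‖`. -/
theorem stmt12 (n p : ℕ) (hn : 1 ≤ n) (hp : 1 ≤ p) (Rb : Matrix (Fin n) (Fin n) ℝ)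
    (hnonneg : ∀ i j, 0 ≤ Rb i j) (hrow : ∀ i, ∑ j, Rb i j = 1)
    (hdiag : ∀ i, 0 < Rb i i)
    (hirr : ∀ i j, ∃ k : ℕ, 0 < (Rb ^ k) i j)
    (π : Fin n → ℝ) (hπpos : ∀ i, 0 < π i) (hπsum : ∑ i, π i = 1)
    (hπstat : Matrix.vecMul π Rb = π)
    (f : Fin n → (Fin p → ℝ) → ℝ) (g : Fin n → (Fin p → ℝ) → Fin p → ℝ)
    (L : ℝ) (hL : 0 < L)
    (hgrad : ∀ i, IsGradient (f i) (g i))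
    (hLip : ∀ i x x', eucNorm (g i x - g i x') ≤ L * eucNorm (x - x'))
    (NR : (Fin n × Fin p → ℝ) → ℝ)
    (hNRtri : ∀ z w, NR (z + w) ≤ NR z + NR w)
    (hNRhom : ∀ (a : ℝ) z, NR (a • z) = |a| * NR z)
    (hNRdef : ∀ z, NR z = 0 ↔ z = 0)
    (hNRge : ∀ z, eucNorm z ≤ NR z)
    (κ₃ : ℝ) (hκ₃ : 0 < κ₃) (hκ₃R : ∀ z, NR z ≤ κ₃ * eucNorm z)
    (vt : ℝ) (hvt : vt = ⨆ k : ℕ, specNorm (VtinvK n p Rb k))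
    (σR : ℝ) (hσRdef : σR = opNorm NR (RK n p Rb - VinfK n p π))
    (hσR0 : 0 < σR) (hσR1 : σR < 1) :
    ∀ k : ℕ, 1 ≤ k → ∀ z z' : Fin n × Fin p → ℝ,
      eucNorm ((VtinvK n p Rb k).mulVec (gradf g z)
          - (VtinvK n p Rb (k - 1)).mulVec (gradf g z')) ≤
        vt * L * NR (z - z')
          + 2 * vt ^ 2 * Real.sqrt n * κ₃ * σR ^ (k - 1) * eucNorm (gradf g z) := by
  classical
  set c0 : Fin p := ⟨0, hp⟩ with hc0
  -- NR basics
  have hNR0 : ∀ w : Fin n × Fin p → ℝ, 0 ≤ NR w := fun w =>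
    le_trans (eucNorm_nonneg w) (hNRge w)
  have hNRpos : ∀ w : Fin n × Fin p → ℝ, w ≠ 0 → 0 < NR w := fun w hw =>
    lt_of_lt_of_le (eucNorm_pos hw) (hNRge w)
  have hκ1 : 1 ≤ κ₃ := by
    have hone : (fun _ : Fin n × Fin p => (1:ℝ)) ≠ 0 := by
      intro h
      have := congrFun h (⟨0, hn⟩, c0)
      simp at this
    have he : 0 < eucNorm (fun _ : Fin n × Fin p => (1:ℝ)) := eucNorm_pos hone
    have h2 := le_trans (hNRge (fun _ => 1)) (hκ₃R (fun _ => 1))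
    nlinarith
  have hσ0 : (0:ℝ) ≤ σR := hσR0.le
  set A : Matrix (Fin n × Fin p) (Fin n × Fin p) ℝ := RK n p Rb - VinfK n p π with hA
  have hAop : ∀ y, NR (A.mulVec y) ≤ σR * NR y := by
    intro y
    by_cases hy : y = 0
    · subst hy
      rw [Matrix.mulVec_zero, (hNRdef 0).mpr rfl]
      simp
    · have hy' : 0 < NR y := hNRpos y hy
      set F := Real.sqrt (∑ q, ∑ r, A q r ^ 2) with hF
      have hF0 : 0 ≤ F := Real.sqrt_nonneg _
      have hbdd : BddAbove {c : ℝ | ∃ w : Fin n × Fin p → ℝ, w ≠ 0 ∧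
          c = NR (A.mulVec w) / NR w} := by
        refine ⟨κ₃ * F, ?_⟩
        rintro c ⟨w, hw, rfl⟩
        have hw' : 0 < NR w := hNRpos w hw
        rw [div_le_iff₀ hw']
        calc NR (A.mulVec w) ≤ κ₃ * eucNorm (A.mulVec w) := hκ₃R _
          _ ≤ κ₃ * (F * eucNorm w) :=
              mul_le_mul_of_nonneg_left (eucNorm_mulVec_le A w) hκ₃.le
          _ ≤ κ₃ * (F * NR w) :=
              mul_le_mul_of_nonneg_left (mul_le_mul_of_nonneg_left (hNRge w) hF0) hκ₃.le
          _ = κ₃ * F * NR w := by ring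
      have hle : NR (A.mulVec y) / NR y ≤ σR := by
        rw [hσRdef]
        exact le_csSup hbdd ⟨y, hy, rfl⟩
      rw [div_le_iff₀ hy'] at hle
      linarith
  have hApow : ∀ (j : ℕ) (y : Fin n × Fin p → ℝ),
      NR ((A ^ j).mulVec y) ≤ σR ^ j * NR y := by
    intro j
    induction j with
    | zero => intro y; simp [Matrix.one_mulVec]
    | succ m ih =>
      intro y
      have heq : (A ^ (m+1)).mulVec y = A.mulVec ((A ^ m).mulVec y) := by
        rw [Matrix.mulVec_mulVec, ← pow_succ']
      rw [heq]
      calc NR (A.mulVec ((A ^ m).mulVec y)) ≤ σR * NR ((A ^ m).mulVec y) := hAop _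
        _ ≤ σR * (σR ^ m * NR y) := mul_le_mul_of_nonneg_left (ih y) hσ0
        _ = σR ^ (m + 1) * NR y := by ring
  -- matrix algebra over Fin n
  set Mπ : Matrix (Fin n) (Fin n) ℝ := Matrix.of (fun _ j => π j) with hMπ
  have hRM : Rb * Mπ = Mπ := by
    ext i j
    simp only [Matrix.mul_apply, hMπ, Matrix.of_apply]
    rw [← Finset.sum_mul, hrow i, one_mul]
  have hMR : Mπ * Rb = Mπ := by
    ext i j
    simp only [Matrix.mul_apply, hMπ, Matrix.of_apply]
    have := congrFun hπstat j
    simpa [Matrix.vecMul, dotProduct] using this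
  have hMM : Mπ * Mπ = Mπ := by
    ext i j
    simp only [Matrix.mul_apply, hMπ, Matrix.of_apply]
    rw [← Finset.sum_mul, hπsum, one_mul]
  have hRkM : ∀ j : ℕ, Rb ^ j * Mπ = Mπ := by
    intro j
    induction j with
    | zero => simp
    | succ m ih => rw [pow_succ, mul_assoc, hRM, ih]
  have hpowRM : ∀ j : ℕ, (Rb - Mπ) ^ (j + 1) = Rb ^ (j + 1) - Mπ := by
    intro j
    induction j with
    | zero => simp
    | succ m ih =>
      rw [pow_succ, ih, sub_mul, mul_sub, mul_sub, hRkM, hMR, hMM, ← pow_succ]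
      abel
  have hAeq : A = (Rb - Mπ) ⊗ₖ (1 : Matrix (Fin p) (Fin p) ℝ) := by
    ext q r
    rcases q with ⟨i, c⟩
    rcases r with ⟨i', c'⟩
    simp [hA, RK, VinfK, Matrix.kronecker_apply, Matrix.sub_apply, sub_mul, hMπ]
  have hKmul : ∀ B C : Matrix (Fin n) (Fin n) ℝ,
      (B ⊗ₖ (1 : Matrix (Fin p) (Fin p) ℝ)) * (C ⊗ₖ (1 : Matrix (Fin p) (Fin p) ℝ)) =
        (B * C) ⊗ₖ (1 : Matrix (Fin p) (Fin p) ℝ) := by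
    intro B C
    rw [← Matrix.mul_kronecker_mul, one_mul]
  have hAK : ∀ j : ℕ, A ^ (j + 1) = (Rb ^ (j + 1) - Mπ) ⊗ₖ (1 : Matrix (Fin p) (Fin p) ℝ) := by
    have h1 : ∀ m : ℕ, A ^ (m + 1) = ((Rb - Mπ) ^ (m + 1)) ⊗ₖ (1 : Matrix (Fin p) (Fin p) ℝ) := by
      intro m
      induction m with
      | zero => simpa using hAeq
      | succ l ih => rw [pow_succ, ih, hAeq, hKmul, ← pow_succ]
    intro j
    rw [h1 j, hpowRM j]
  have hπle1 : ∀ i, π i ≤ 1 := fun i => by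
    rw [← hπsum]
    exact Finset.single_le_sum (fun l _ => (hπpos l).le) (Finset.mem_univ i)
  have hsingle_eq : ∀ (i : Fin n), (Pi.single ((i, c0) : Fin n × Fin p) (1:ℝ)) =
      fun q => if q = (i, c0) then (1:ℝ) else 0 := by
    intro i; funext q; rw [Pi.single_apply]
  have hsingle_norm : ∀ i : Fin n,
      eucNorm (Pi.single ((i, c0) : Fin n × Fin p) (1:ℝ)) = 1 := by
    intro i
    rw [hsingle_eq i, eucNorm_single]
    norm_num
  have hdiagclose : ∀ (j : ℕ) (i : Fin n), |(Rb ^ j) i i - π i| ≤ κ₃ * σR ^ j := by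
    intro j i
    cases j with
    | zero =>
      simp only [pow_zero, Matrix.one_apply_eq]
      rw [abs_le]
      constructor <;> nlinarith [hπpos i, hπle1 i]
    | succ m =>
      set e : Fin n × Fin p → ℝ := Pi.single (i, c0) 1 with he
      have hval : ((A ^ (m+1)).mulVec e) (i, c0) = (Rb ^ (m+1)) i i - π i := by
        rw [he, Matrix.mulVec_single]
        simp [hAK m, Matrix.kronecker_apply, Matrix.sub_apply, hMπ, Matrix.one_apply_eq]
      calc |(Rb ^ (m+1)) i i - π i| = |((A ^ (m+1)).mulVec e) (i, c0)| := by rw [hval]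
        _ ≤ eucNorm ((A ^ (m+1)).mulVec e) := abs_le_eucNorm _ _
        _ ≤ NR ((A ^ (m+1)).mulVec e) := hNRge _
        _ ≤ σR ^ (m+1) * NR e := hApow (m+1) e
        _ ≤ σR ^ (m+1) * (κ₃ * eucNorm e) :=
            mul_le_mul_of_nonneg_left (hκ₃R e) (pow_nonneg hσ0 _)
        _ = κ₃ * σR ^ (m+1) := by rw [he, hsingle_norm i]; ring
  have hpownn : ∀ (j : ℕ) (a b : Fin n), 0 ≤ (Rb ^ j) a b := by
    intro j
    induction j with
    | zero =>
      intro a b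
      by_cases h : a = b <;> simp [h, Matrix.one_apply]
    | succ m ih =>
      intro a b
      rw [pow_succ, Matrix.mul_apply]
      exact Finset.sum_nonneg fun l _ => mul_nonneg (ih a l) (hnonneg l b)
  have hdiagpow : ∀ (j : ℕ) (i : Fin n), (Rb i i) ^ j ≤ (Rb ^ j) i i := by
    intro j
    induction j with
    | zero => intro i; simp
    | succ m ih =>
      intro i
      rw [pow_succ, pow_succ, Matrix.mul_apply]
      calc Rb i i ^ m * Rb i i ≤ (Rb ^ m) i i * Rb i i :=
            mul_le_mul_of_nonneg_right (ih i) (hnonneg i i)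
        _ ≤ ∑ l, (Rb ^ m) i l * Rb l i :=
            Finset.single_le_sum (fun l _ => mul_nonneg (hpownn m i l) (hnonneg l i))
              (Finset.mem_univ i)
  have hdpos : ∀ (j : ℕ) (i : Fin n), 0 < (Rb ^ j) i i := fun j i =>
    lt_of_lt_of_le (pow_pos (hdiag i) j) (hdiagpow j i)
  -- uniform lower bound on diagonal entries
  obtain ⟨i0, -, hi0⟩ := Finset.exists_min_image Finset.univ π ⟨⟨0, hn⟩, Finset.mem_univ _⟩
  set πm := π i0 with hπmdef
  have hπm0 : 0 < πm := hπpos i0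
  have hπmle : ∀ i, πm ≤ π i := fun i => hi0 i (Finset.mem_univ i)
  have htend : Filter.Tendsto (fun j : ℕ => κ₃ * σR ^ j) Filter.atTop (nhds 0) := by
    have h := tendsto_pow_atTop_nhds_zero_of_lt_one hσ0 hσR1
    simpa using h.const_mul κ₃
  obtain ⟨K, hKle⟩ := (htend.eventually_lt_const (show (0:ℝ) < πm / 2 by linarith)).exists
  obtain ⟨i1, -, hi1⟩ := Finset.exists_min_image Finset.univ (fun i => Rb i i)
    ⟨⟨0, hn⟩, Finset.mem_univ _⟩
  set rm := Rb i1 i1 with hrmdef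
  have hrm0 : 0 < rm := hdiag i1
  have hrm1 : rm ≤ 1 := by
    calc rm ≤ ∑ l, Rb i1 l :=
          Finset.single_le_sum (fun l _ => hnonneg i1 l) (Finset.mem_univ i1)
      _ = 1 := hrow i1
  have hrmle : ∀ i, rm ≤ Rb i i := fun i => hi1 i (Finset.mem_univ i)
  set δ : ℝ := min (πm / 2) (rm ^ K) with hδ
  have hδ0 : 0 < δ := lt_min (by linarith) (pow_pos hrm0 K)
  have hδle : ∀ (j : ℕ) (i : Fin n), δ ≤ (Rb ^ j) i i := by
    intro j i
    rcases le_or_gt K j with hj | hj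
    · have h1 : σR ^ j ≤ σR ^ K := pow_le_pow_of_le_one hσ0 hσR1.le hj
      have h2 : κ₃ * σR ^ j ≤ πm / 2 :=
        le_trans (mul_le_mul_of_nonneg_left h1 (by linarith)) hKle.le
      have h4 := abs_le.mp (hdiagclose j i)
      have h5 := hπmle i
      calc δ ≤ πm / 2 := min_le_left _ _
        _ ≤ (Rb ^ j) i i := by linarith [h4.1]
    · calc δ ≤ rm ^ K := min_le_right _ _
        _ ≤ rm ^ j := pow_le_pow_of_le_one hrm0.le hrm1 hj.le
        _ ≤ (Rb i i) ^ j := pow_le_pow_left₀ hrm0.le (hrmle i) j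
        _ ≤ (Rb ^ j) i i := hdiagpow j i
  have hδinv0 : (0:ℝ) ≤ δ⁻¹ := (inv_pos.mpr hδ0).le
  have hdbound : ∀ (j : ℕ) (q : Fin n × Fin p), |((Rb ^ j) q.1 q.1)⁻¹| ≤ δ⁻¹ := by
    intro j q
    rw [abs_of_pos (inv_pos.mpr (hdpos j q.1))]
    have h := one_div_le_one_div_of_le hδ0 (hδle j q.1)
    rw [one_div, one_div] at h
    exact h
  have hVtbd : ∀ (j : ℕ) (y : Fin n × Fin p → ℝ),
      eucNorm ((VtinvK n p Rb j).mulVec y) ≤ δ⁻¹ * eucNorm y := fun j y =>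
    eucNorm_diagonal_mulVec_le hδinv0 (hdbound j) y
  have hspecle : ∀ j : ℕ, specNorm (VtinvK n p Rb j) ≤ δ⁻¹ := fun j =>
    specNorm_le_of_bound hδinv0 (hVtbd j)
  have hvtrange : BddAbove (Set.range fun k : ℕ => specNorm (VtinvK n p Rb k)) := by
    refine ⟨δ⁻¹, ?_⟩
    rintro c ⟨j, rfl⟩
    exact hspecle j
  have hvtge : ∀ j : ℕ, specNorm (VtinvK n p Rb j) ≤ vt := by
    intro j
    rw [hvt]
    exact le_ciSup hvtrange j
  have hvt0 : 0 ≤ vt := le_trans (specNorm_nonneg' hδinv0 (hVtbd 0)) (hvtge 0)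
  have hinvle : ∀ (j : ℕ) (i : Fin n), ((Rb ^ j) i i)⁻¹ ≤ vt := by
    intro j i
    have h1 : eucNorm ((VtinvK n p Rb j).mulVec (Pi.single (i, c0) 1)) =
        ((Rb ^ j) i i)⁻¹ := by
      have hms : (VtinvK n p Rb j).mulVec (Pi.single (i, c0) 1) =
          fun r => (VtinvK n p Rb j) r (i, c0) * 1 := by
        funext r; simp [Matrix.mulVec, dotProduct, Pi.single_apply]
      rw [hms]
      have heq : (fun r => (VtinvK n p Rb j) r (i, c0) * 1) =
          fun r : Fin n × Fin p => if r = (i, c0) then ((Rb ^ j) i i)⁻¹ else 0 := by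
        funext r
        rw [mul_one]
        by_cases h : r = (i, c0)
        · subst h; simp [VtinvK, Matrix.diagonal_apply_eq]
        · simp [VtinvK, Matrix.diagonal_apply_ne _ h, h]
      rw [heq, eucNorm_single, abs_of_pos (inv_pos.mpr (hdpos j i))]
    calc ((Rb ^ j) i i)⁻¹ = eucNorm ((VtinvK n p Rb j).mulVec (Pi.single (i, c0) 1)) := h1.symm
      _ ≤ specNorm (VtinvK n p Rb j) :=
          le_specNorm_of_unit hδinv0 (hVtbd j) (le_of_eq (hsingle_norm i))
      _ ≤ vt := hvtge j
  have hVtmul : ∀ (j : ℕ) (y : Fin n × Fin p → ℝ),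
      eucNorm ((VtinvK n p Rb j).mulVec y) ≤ vt * eucNorm y := by
    intro j y
    calc eucNorm ((VtinvK n p Rb j).mulVec y)
        ≤ specNorm (VtinvK n p Rb j) * eucNorm y := mulVec_le_specNorm hδinv0 (hVtbd j) y
      _ ≤ vt * eucNorm y := mul_le_mul_of_nonneg_right (hvtge j) (eucNorm_nonneg y)
  have hL0 : 0 ≤ L := hL.le
  have hgLip : ∀ z z' : Fin n × Fin p → ℝ,
      eucNorm (gradf g z - gradf g z') ≤ L * eucNorm (z - z') := by
    intro z z'
    apply eucNorm_le_of_sq_le (mul_nonneg hL0 (eucNorm_nonneg _))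
    rw [mul_pow, eucNorm_sq]
    calc ∑ q : Fin n × Fin p, (gradf g z - gradf g z') q ^ 2
        = ∑ i : Fin n, ∑ c : Fin p,
            ((g i (fun j => z (i, j)) - g i (fun j => z' (i, j))) c) ^ 2 := by
          rw [Fintype.sum_prod_type]
          rfl
      _ ≤ ∑ i : Fin n, L ^ 2 * ∑ c : Fin p, ((fun j => z (i, j) - z' (i, j)) c) ^ 2 := by
          apply Finset.sum_le_sum
          intro i _
          have h := hLip i (fun j => z (i, j)) (fun j => z' (i, j))
          have h2 := pow_le_pow_left₀ (eucNorm_nonneg _) h 2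
          rw [eucNorm_sq, mul_pow, eucNorm_sq] at h2
          exact h2
      _ = L ^ 2 * ∑ q : Fin n × Fin p, (z - z') q ^ 2 := by
          rw [← Finset.mul_sum, Fintype.sum_prod_type]
          rfl
  -- main computation
  intro k hk z z'
  obtain ⟨m, rfl⟩ : ∃ m, k = m + 1 := ⟨k - 1, (Nat.succ_pred_eq_of_pos hk).symm⟩
  simp only [Nat.add_sub_cancel]
  set u := gradf g z with hu
  set u' := gradf g z' with hu'
  set Dk := VtinvK n p Rb (m + 1) with hDk
  set Dm := VtinvK n p Rb m with hDm
  have hsplit : Dk.mulVec u - Dm.mulVec u' = Dm.mulVec (u - u') + (Dk - Dm).mulVec u := by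
    rw [Matrix.mulVec_sub, Matrix.sub_mulVec]
    abel
  rw [hsplit]
  have ht1 : eucNorm (Dm.mulVec (u - u')) ≤ vt * L * NR (z - z') := by
    calc eucNorm (Dm.mulVec (u - u')) ≤ vt * eucNorm (u - u') := hVtmul m _
      _ ≤ vt * (L * eucNorm (z - z')) := mul_le_mul_of_nonneg_left (hgLip z z') hvt0
      _ ≤ vt * (L * NR (z - z')) := by
          apply mul_le_mul_of_nonneg_left _ hvt0
          exact mul_le_mul_of_nonneg_left (hNRge _) hL0
      _ = vt * L * NR (z - z') := by ring
  have hcoef0 : (0:ℝ) ≤ 2 * vt ^ 2 * κ₃ * σR ^ m :=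
    mul_nonneg (mul_nonneg (mul_nonneg (by norm_num) (sq_nonneg vt)) hκ₃.le)
      (pow_nonneg hσ0 m)
  have ht2 : eucNorm ((Dk - Dm).mulVec u) ≤ 2 * vt ^ 2 * κ₃ * σR ^ m * eucNorm u := by
    have hDsub : Dk - Dm = Matrix.diagonal
        (fun q : Fin n × Fin p => ((Rb ^ (m + 1)) q.1 q.1)⁻¹ - ((Rb ^ m) q.1 q.1)⁻¹) := by
      rw [hDk, hDm]
      exact Matrix.diagonal_sub _ _
    rw [hDsub]
    apply eucNorm_diagonal_mulVec_le hcoef0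
    intro q
    have ha : 0 < (Rb ^ (m + 1)) q.1 q.1 := hdpos (m + 1) q.1
    have hb : 0 < (Rb ^ m) q.1 q.1 := hdpos m q.1
    set a := (Rb ^ (m + 1)) q.1 q.1
    set b := (Rb ^ m) q.1 q.1
    have hainv := hinvle (m + 1) q.1
    have hbinv := hinvle m q.1
    have h1 := hdiagclose (m + 1) q.1
    have h2 := hdiagclose m q.1
    have heq : a⁻¹ - b⁻¹ = (b - a) * (a⁻¹ * b⁻¹) := by
      field_simp
    rw [heq, abs_mul]
    have h3 : |b - a| ≤ 2 * κ₃ * σR ^ m := by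
      have hσm : σR ^ (m + 1) ≤ σR ^ m := by
        rw [pow_succ]
        nlinarith [pow_nonneg hσ0 m]
      calc |b - a| = |(b - π q.1) - (a - π q.1)| := by congr 1; ring
        _ ≤ |b - π q.1| + |a - π q.1| := abs_sub _ _
        _ ≤ κ₃ * σR ^ m + κ₃ * σR ^ (m + 1) := add_le_add h2 h1
        _ ≤ 2 * κ₃ * σR ^ m := by
            linarith [mul_le_mul_of_nonneg_left hσm hκ₃.le]
    have h5 : |a⁻¹ * b⁻¹| ≤ vt * vt := by
      rw [abs_mul, abs_of_pos (inv_pos.mpr ha), abs_of_pos (inv_pos.mpr hb)]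
      exact mul_le_mul hainv hbinv (inv_pos.mpr hb).le hvt0
    calc |b - a| * |a⁻¹ * b⁻¹| ≤ (2 * κ₃ * σR ^ m) * (vt * vt) :=
          mul_le_mul h3 h5 (abs_nonneg _)
            (mul_nonneg (mul_nonneg (by norm_num) hκ₃.le) (pow_nonneg hσ0 m))
      _ = 2 * vt ^ 2 * κ₃ * σR ^ m := by ring
  have htone : (1:ℝ) ≤ Real.sqrt n := by
    rw [show (1:ℝ) = Real.sqrt 1 from Real.sqrt_one.symm]
    apply Real.sqrt_le_sqrt
    exact_mod_cast hn
  have ht2' : 2 * vt ^ 2 * κ₃ * σR ^ m * eucNorm u ≤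
      2 * vt ^ 2 * Real.sqrt n * κ₃ * σR ^ m * eucNorm u := by
    have hx : (0:ℝ) ≤ 2 * vt ^ 2 * κ₃ * σR ^ m * eucNorm u :=
      mul_nonneg hcoef0 (eucNorm_nonneg u)
    calc 2 * vt ^ 2 * κ₃ * σR ^ m * eucNorm u
        = (2 * vt ^ 2 * κ₃ * σR ^ m * eucNorm u) * 1 := (mul_one _).symm
      _ ≤ (2 * vt ^ 2 * κ₃ * σR ^ m * eucNorm u) * Real.sqrt n :=
          mul_le_mul_of_nonneg_left htone hx
      _ = 2 * vt ^ 2 * Real.sqrt n * κ₃ * σR ^ m * eucNorm u := by ring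
  calc eucNorm (Dm.mulVec (u - u') + (Dk - Dm).mulVec u)
      ≤ eucNorm (Dm.mulVec (u - u')) + eucNorm ((Dk - Dm).mulVec u) := eucNorm_add_le _ _
    _ ≤ vt * L * NR (z - z') + 2 * vt ^ 2 * κ₃ * σR ^ m * eucNorm u := add_le_add ht1 ht2
    _ ≤ vt * L * NR (z - z') + 2 * vt ^ 2 * Real.sqrt n * κ₃ * σR ^ m * eucNorm u := by
        linarith [ht2']
end
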